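/- arXiv:2005.12997 — 9 statements merged into one kernel-verified Lean document; each statement's English description precedes it below -/
import Mathlib

section
/- Let k ≥ 2 be an integer and w a real number with 0 < w ≤ 1/k. Then there exists a unique ε > 0 such that ∫_0^{1+ε} exp(-w v^k) dv = 1, and this ε satisfies ε < 2w/k; i.e., the dominant singularity ρ̃ = 1 + ε of the perturbed generating function satisfies 1 < ρ̃ < 1 + 2w/k. -/
open Real MeasureTheory Set intervalIntegral

private lemma cont_aux (w : ℝ) (k : ℕ) :
    Continuous fun v : ℝ => Real.exp (-w * v ^ k) :=
  Real.continuous_exp.comp (continuous_const.mul (continuous_pow k))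

private lemma intg_aux (w : ℝ) (k : ℕ) (a b : ℝ) :
    IntervalIntegrable (fun v : ℝ => Real.exp (-w * v ^ k)) volume a b :=
  (cont_aux w k).intervalIntegrable a b

private lemma Fmono (w : ℝ) (k : ℕ) :
    StrictMono fun x : ℝ => ∫ v in (0:ℝ)..x, Real.exp (-w * v ^ k) := by
  intro a b hab
  have h := intervalIntegral.integral_add_adjacent_intervals (intg_aux w k 0 a) (intg_aux w k a b)
  have hpos : 0 < ∫ v in a..b, Real.exp (-w * v ^ k) :=
    intervalIntegral_pos_of_pos (intg_aux w k a b) (fun x => Real.exp_pos _) hab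
  simp only
  linarith

private lemma F1_lt (w : ℝ) (k : ℕ) (hw : 0 < w) :
    (∫ v in (0:ℝ)..1, Real.exp (-w * v ^ k)) < 1 := by
  have split := intervalIntegral.integral_add_adjacent_intervals
    (intg_aux w k 0 (1/2)) (intg_aux w k (1/2) 1)
  have h1 : (∫ v in (0:ℝ)..(1/2), Real.exp (-w * v ^ k)) ≤ 1/2 := by
    have h := intervalIntegral.integral_mono_on (by norm_num : (0:ℝ) ≤ 1/2)
      (intg_aux w k 0 (1/2)) (_root_.intervalIntegrable_const (c := (1:ℝ)))
      (fun v hv => by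
        have h0 : 0 ≤ v ^ k := pow_nonneg hv.1 k
        have : -w * v ^ k ≤ 0 := by nlinarith
        simpa using Real.exp_le_one_iff.mpr this)
    have hc : (∫ _v in (0:ℝ)..(1/2), (1:ℝ)) = 1/2 := by
      rw [intervalIntegral.integral_const]; norm_num
    linarith [hc ▸ h]
  have h2 : (∫ v in (1/2:ℝ)..1, Real.exp (-w * v ^ k)) ≤ (1/2) * Real.exp (-w * (1/2)^k) := by
    have h := intervalIntegral.integral_mono_on (by norm_num : (1/2:ℝ) ≤ 1)
      (intg_aux w k (1/2) 1)
      (_root_.intervalIntegrable_const (c := Real.exp (-w * (1/2)^k)))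
      (fun v hv => by
        have hp : (1/2:ℝ)^k ≤ v ^ k := pow_le_pow_left₀ (by norm_num) hv.1 k
        exact Real.exp_le_exp.2 (by nlinarith))
    have hc : (∫ _v in (1/2:ℝ)..1, Real.exp (-w * (1/2)^k)) = (1/2) * Real.exp (-w * (1/2)^k) := by
      rw [intervalIntegral.integral_const]; norm_num
    linarith [hc ▸ h]
  have h3 : Real.exp (-w * (1/2)^k) < 1 := by
    apply Real.exp_lt_one_iff.mpr
    have : (0:ℝ) < (1/2)^k := by positivity
    nlinarith
  linarith

private lemma key_gt2 (w : ℝ) (hw : 0 < w) (hwk : w ≤ 1/2) :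
    1 < ∫ v in (0:ℝ)..(1+w), Real.exp (-w * v ^ 2) := by
  have hpt : ∀ v ∈ Icc (0:ℝ) (1+w), 1 - w*v^2 + w^2/4 * v^4 ≤ Real.exp (-w * v ^ 2) := by
    intro v hv
    obtain ⟨hv0, hv1⟩ := hv
    have hx : w * v^2 / 2 ≤ 1 := by nlinarith
    have h1 : 0 ≤ 1 - w*v^2/2 := by linarith
    have h2 : 1 - w*v^2/2 ≤ Real.exp (-(w*v^2/2)) := by
      linarith [Real.add_one_le_exp (-(w*v^2/2))]
    calc 1 - w*v^2 + w^2/4 * v^4 = (1 - w*v^2/2)^2 := by ring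
      _ ≤ Real.exp (-(w*v^2/2))^2 := by nlinarith [Real.exp_pos (-(w*v^2/2))]
      _ = Real.exp (-w * v ^ 2) := by
          rw [sq, ← Real.exp_add]; ring_nf
  have hint : IntervalIntegrable (fun v:ℝ => 1 - w*v^2 + w^2/4*v^4) volume 0 (1+w) :=
    ((continuous_const.sub (continuous_const.mul (continuous_pow 2))).add (continuous_const.mul (continuous_pow 4))).intervalIntegrable 0 (1+w)
  have hmono := intervalIntegral.integral_mono_on (by linarith : (0:ℝ) ≤ 1+w)
    hint (intg_aux w 2 0 (1+w)) hpt
  have hcalc : (∫ v in (0:ℝ)..(1+w), (1 - w*v^2 + w^2/4*v^4)) =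
      (1+w) - w*((1+w)^3/3) + w^2/4*((1+w)^5/5) := by
    rw [intervalIntegral.integral_add (by
        exact (show IntervalIntegrable (fun v:ℝ => 1 - w*v^2) volume 0 (1+w) from (continuous_const.sub (continuous_const.mul (continuous_pow 2))).intervalIntegrable 0 (1+w)))
        (show IntervalIntegrable (fun v:ℝ => w^2/4*v^4) volume 0 (1+w) from (continuous_const.mul (continuous_pow 4)).intervalIntegrable 0 (1+w)),
      intervalIntegral.integral_sub _root_.intervalIntegrable_const
        ((by continuity : Continuous fun v:ℝ => w*v^2).intervalIntegrable 0 (1+w)),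
      intervalIntegral.integral_const_mul, intervalIntegral.integral_const_mul,
      integral_pow, integral_pow]
    norm_num
  rw [hcalc] at hmono
  have e : (1+w) - w*((1+w)^3/3) + w^2/4*((1+w)^5/5) - 1
      = w*((40 - 57*w - 45*w^2) + (10*w^3 + 30*w^4 + 15*w^5 + 3*w^6))/60 := by ring
  have key : 0 < 40 - 57*w - 45*w^2 := by nlinarith
  have rest : 0 ≤ 10*w^3 + 30*w^4 + 15*w^5 + 3*w^6 := by positivity
  have hpos : 0 < w*((40 - 57*w - 45*w^2) + (10*w^3 + 30*w^4 + 15*w^5 + 3*w^6))/60 := by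
    apply div_pos (mul_pos hw (by linarith)) (by norm_num)
  linarith

private lemma key_gt3 (k : ℕ) (hk : 3 ≤ k) (w : ℝ) (hw : 0 < w) (hwk : w ≤ 1 / k) :
    1 < ∫ v in (0:ℝ)..(1 + 2*w/k), Real.exp (-w * v ^ k) := by
  have hk0 : (0:ℝ) < k := by
    have : 0 < k := by omega
    exact_mod_cast this
  have hk3 : (3:ℝ) ≤ k := by exact_mod_cast hk
  set δ := 2*w/(k:ℝ) with hδdef
  have hδ : 0 < δ := by positivity
  have split := intervalIntegral.integral_add_adjacent_intervals
    (intg_aux w k 0 1) (intg_aux w k 1 (1+δ))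
  -- lower bound on [0,1]
  have h1 : (1 : ℝ) - w / ((k:ℝ)+1) ≤ ∫ v in (0:ℝ)..1, Real.exp (-w * v^k) := by
    have hcalc : (∫ v in (0:ℝ)..1, (1 - w * v ^ k)) = 1 - w / ((k:ℝ)+1) := by
      rw [intervalIntegral.integral_sub _root_.intervalIntegrable_const
        (show IntervalIntegrable (fun v:ℝ => w * v ^ k) volume 0 1 from (continuous_const.mul (continuous_pow k)).intervalIntegrable 0 1),
        intervalIntegral.integral_const_mul, integral_pow]
      norm_num [div_eq_mul_inv]
    have hpt1 : ∀ v ∈ Icc (0:ℝ) 1, 1 - w * v ^ k ≤ Real.exp (-w * v ^ k) :=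
      fun v _ => by linarith [Real.add_one_le_exp (-w * v^k)]
    have h := intervalIntegral.integral_mono_on (by norm_num : (0:ℝ) ≤ 1)
      (show IntervalIntegrable (fun v:ℝ => 1 - w * v ^ k) volume 0 1 from (continuous_const.sub (continuous_const.mul (continuous_pow k))).intervalIntegrable 0 1)
      (intg_aux w k 0 1) hpt1
    rw [hcalc] at h; exact h
  -- lower bound on [1, 1+δ]
  have h2 : δ * Real.exp (-w * (1+δ)^k) ≤ ∫ v in (1:ℝ)..(1+δ), Real.exp (-w*v^k) := by
    have h := intervalIntegral.integral_mono_on (by linarith : (1:ℝ) ≤ 1+δ)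
      (_root_.intervalIntegrable_const (c := Real.exp (-w * (1+δ)^k)))
      (intg_aux w k 1 (1+δ))
      (fun v hv => by
        have hvk : v ^ k ≤ (1+δ)^k := pow_le_pow_left₀ (by linarith [hv.1]) hv.2 k
        exact Real.exp_le_exp.2 (by nlinarith))
    have hc : (∫ _v in (1:ℝ)..(1+δ), Real.exp (-w * (1+δ)^k))
        = δ * Real.exp (-w * (1+δ)^k) := by
      rw [intervalIntegral.integral_const]; simp
    linarith [hc ▸ h]
  -- exp lower bound
  have hw3 : w ≤ 1/3 := by
    have h13 : 1/(k:ℝ) ≤ 1/3 := one_div_le_one_div_of_le (by norm_num) hk3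
    linarith
  have hb : (1+δ)^k ≤ Real.exp (2*w) := by
    have h1δ : (1:ℝ)+δ ≤ Real.exp δ := by linarith [Real.add_one_le_exp δ]
    have hp : (1+δ)^k ≤ Real.exp δ ^ k := pow_le_pow_left₀ (by linarith) h1δ k
    have hek : Real.exp δ ^ k = Real.exp ((k:ℝ) * δ) := (Real.exp_nat_mul δ k).symm
    have hkδ : (k:ℝ) * δ = 2*w := by rw [hδdef]; field_simp
    rw [hek, hkδ] at hp; exact hp
  have he2 : Real.exp (2/3) < 2 :=
    (Real.lt_log_iff_exp_lt (by norm_num)).mp (by linarith [Real.log_two_gt_d9])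
  have hee : Real.exp (2*w) ≤ Real.exp (2/3) := Real.exp_le_exp.2 (by linarith)
  have hlog : w * (1+δ)^k < Real.log 2 := by
    have hlt23 : w * (1+δ)^k < 2/3 := by nlinarith [Real.exp_pos (2*w)]
    linarith [Real.log_two_gt_d9]
  have hhalf : (1:ℝ)/2 < Real.exp (-w * (1+δ)^k) := by
    have he : Real.exp (w * (1+δ)^k) < 2 :=
      (Real.lt_log_iff_exp_lt (by norm_num)).mp hlog
    have hone : Real.exp (-w * (1+δ)^k) * Real.exp (w * (1+δ)^k) = 1 := by
      rw [← Real.exp_add]; ring_nf; exact Real.exp_zero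
    nlinarith [Real.exp_pos (-w * (1+δ)^k), Real.exp_pos (w * (1+δ)^k)]
  -- combine
  have hfrac : w / ((k:ℝ)+1) < δ/2 := by
    have hc : δ/2 = w/(k:ℝ) := by rw [hδdef]; ring
    rw [hc]
    exact div_lt_div_of_pos_left hw hk0 (by linarith)
  have htail : δ/2 < δ * Real.exp (-w * (1+δ)^k) := by nlinarith
  linarith

/-- For an integer `k ≥ 2` and a real `w` with `0 < w ≤ 1/k`, there is a unique
`ε > 0` with `∫_0^{1+ε} exp(-w v^k) dv = 1`, and this `ε` satisfies `ε < 2w/k`. -/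
theorem stmt2 (k : ℕ) (hk : 2 ≤ k) (w : ℝ) (hw : 0 < w) (hwk : w ≤ 1 / k) :
    ∃ ε : ℝ, 0 < ε ∧ (∫ v in (0:ℝ)..(1 + ε), Real.exp (-w * v ^ k)) = 1 ∧ ε < 2 * w / k ∧
      ∀ ε' : ℝ, 0 < ε' → (∫ v in (0:ℝ)..(1 + ε'), Real.exp (-w * v ^ k)) = 1 → ε' = ε := by
  have hk0 : (0:ℝ) < k := by
    have : 0 < k := by omega
    exact_mod_cast this
  set F := fun x : ℝ => ∫ v in (0:ℝ)..x, Real.exp (-w * v ^ k) with hF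
  have hmono := Fmono w k
  have hδpos : 0 < 2*w/(k:ℝ) := by positivity
  have hgt : 1 < F (1 + 2*w/(k:ℝ)) := by
    rcases eq_or_lt_of_le hk with h2 | h3
    · subst h2
      have hc : 1 + 2 * w / ((2:ℕ):ℝ) = 1 + w := by norm_num
      have hwk2 : w ≤ 1/2 := by
        have h22 : ((2:ℕ):ℝ) = 2 := by norm_num
        rw [h22] at hwk; exact hwk
      rw [hc]
      simpa only [hF] using key_gt2 w hw hwk2
    · exact key_gt3 k (by omega) w hw hwk
  have hlt : F 1 < 1 := F1_lt w k hw
  have hcont : Continuous F := intervalIntegral.continuous_primitive (intg_aux w k) 0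
  obtain ⟨x, hx, hFx⟩ := intermediate_value_Icc (by linarith : (1:ℝ) ≤ 1 + 2*w/(k:ℝ))
    hcont.continuousOn (⟨hlt.le, hgt.le⟩ : (1:ℝ) ∈ Icc (F 1) (F (1 + 2*w/(k:ℝ))))
  have hx1 : 1 < x := by
    have h : F 1 < F x := by rw [hFx]; exact hlt
    exact hmono.lt_iff_lt.mp h
  have hx2 : x < 1 + 2*w/(k:ℝ) := by
    have h : F x < F (1 + 2*w/(k:ℝ)) := by rw [hFx]; exact hgt
    exact hmono.lt_iff_lt.mp h
  refine ⟨x - 1, by linarith, ?_, by linarith, ?_⟩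
  · have h : 1 + (x - 1) = x := by ring
    rw [h]; exact hFx
  · intro ε' hε' heq
    have h : F (1 + ε') = F x := by rw [hFx]; exact heq
    have := hmono.injective h
    linarith [this]
end

section
/- For each integer k ≥ 2 let w_k be a real number with 0 < w_k ≤ 1/k, and let ε_k be the unique positive real number with ∫_0^{1+ε_k} exp(-w_k v^k) dv = 1. Then k · ε_k / w_k → 1 as k → ∞; i.e., ρ̃_k = 1 + ε_k ~ 1 + w_k/k. -/
open Real Filter intervalIntegral

private lemma contInt (w : ℝ) (k : ℕ) (a b : ℝ) :
    IntervalIntegrable (fun v : ℝ => Real.exp (-w * v ^ k)) MeasureTheory.volume a b :=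
  (Real.continuous_exp.comp (by continuity)).intervalIntegrable a b

private lemma exp_neg_le (x : ℝ) (hx : 0 ≤ x) : Real.exp (-x) ≤ 1 - x + x ^ 2 := by
  have h1 : x + 1 ≤ Real.exp x := Real.add_one_le_exp x
  have h2 : Real.exp (-x) * Real.exp x = 1 := by rw [← Real.exp_add]; simp
  nlinarith [Real.exp_pos x, Real.exp_pos (-x), sq_nonneg x,
    mul_le_mul_of_nonneg_left h1 (Real.exp_pos (-x)).le]

private lemma pow_le_exp (a : ℝ) (ha : 0 ≤ a) (n : ℕ) : (1 + a) ^ n ≤ Real.exp ((n : ℝ) * a) := by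
  calc (1 + a) ^ n ≤ (Real.exp a) ^ n :=
        pow_le_pow_left₀ (by linarith) (by linarith [Real.add_one_le_exp a]) n
    _ = Real.exp ((n : ℝ) * a) := by rw [Real.exp_nat_mul]

private lemma G_lower (w z : ℝ) (k : ℕ) (hz : 0 ≤ z) :
    z - w * z ^ (k + 1) / ((k : ℝ) + 1) ≤ ∫ v in (0:ℝ)..z, Real.exp (-w * v ^ k) := by
  have hcalc : (∫ v in (0:ℝ)..z, (1 - w * v ^ k)) = z - w * z ^ (k + 1) / ((k : ℝ) + 1) := by
    rw [intervalIntegral.integral_sub intervalIntegrable_const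
      ((show Continuous fun v : ℝ => w * v ^ k by fun_prop).intervalIntegrable 0 z),
      intervalIntegral.integral_const_mul, integral_pow]
    simp
    ring
  rw [← hcalc]
  apply intervalIntegral.integral_mono_on hz
    ((continuous_const.sub (continuous_const.mul (continuous_pow k))).intervalIntegrable 0 z)
    (contInt w k 0 z)
  intro v _
  have := Real.add_one_le_exp (-(w * v ^ k))
  simpa [neg_mul] using by linarith

private lemma G_upper (w z : ℝ) (k : ℕ) (hw : 0 ≤ w) (hz : 0 ≤ z) :
    (∫ v in (0:ℝ)..z, Real.exp (-w * v ^ k)) ≤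
      z - w * z ^ (k + 1) / ((k : ℝ) + 1) + w ^ 2 * z ^ (2 * k + 1) / (2 * (k : ℝ) + 1) := by
  have hcalc : (∫ v in (0:ℝ)..z, (1 - w * v ^ k + w ^ 2 * v ^ (2 * k))) =
      z - w * z ^ (k + 1) / ((k : ℝ) + 1) + w ^ 2 * z ^ (2 * k + 1) / (2 * (k : ℝ) + 1) := by
    rw [intervalIntegral.integral_add
      ((show Continuous fun v : ℝ => 1 - w * v ^ k by fun_prop).intervalIntegrable 0 z)
      ((show Continuous fun v : ℝ => w ^ 2 * v ^ (2 * k) by fun_prop).intervalIntegrable 0 z),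
      intervalIntegral.integral_sub intervalIntegrable_const
      ((show Continuous fun v : ℝ => w * v ^ k by fun_prop).intervalIntegrable 0 z),
      intervalIntegral.integral_const_mul, intervalIntegral.integral_const_mul,
      integral_pow, integral_pow]
    push_cast
    simp
    ring
  rw [← hcalc]
  apply intervalIntegral.integral_mono_on hz (contInt w k 0 z)
    ((show Continuous fun v : ℝ => 1 - w * v ^ k + w ^ 2 * v ^ (2 * k) by
      fun_prop).intervalIntegrable 0 z)
  intro v hv
  have hvk : 0 ≤ w * v ^ k := mul_nonneg hw (pow_nonneg hv.1 k)
  have := exp_neg_le (w * v ^ k) hvk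
  have hsq : (w * v ^ k) ^ 2 = w ^ 2 * v ^ (2 * k) := by rw [mul_pow, ← pow_mul, mul_comm k 2]
  rw [neg_mul]
  linarith [this, hsq.le, hsq.ge]

/-- If for each `k ≥ 2` we have `0 < w k ≤ 1/k` and `ε k` is the (unique) positive
real with `∫_0^{1+ε k} exp(-(w k) v^k) dv = 1`, then `k · ε k / w k → 1` as `k → ∞`. -/
theorem stmt3 (w ε : ℕ → ℝ)
    (hw : ∀ k : ℕ, 2 ≤ k → 0 < w k ∧ w k ≤ 1 / k)
    (hε : ∀ k : ℕ, 2 ≤ k → 0 < ε k ∧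
      (∫ v in (0:ℝ)..(1 + ε k), Real.exp (-(w k) * v ^ k)) = 1) :
    Filter.Tendsto (fun k : ℕ => (k : ℝ) * ε k / w k) Filter.atTop (nhds 1) := by
  have hexp2 : Real.exp 2 ≤ 8 := by
    have h1 : Real.exp 1 < 2.7182818286 := Real.exp_one_lt_d9
    have h2 : Real.exp 2 = Real.exp 1 * Real.exp 1 := by
      rw [← Real.exp_add]; norm_num
    nlinarith [Real.exp_pos 1]
  have key : ∀ k : ℕ, 7 ≤ k →
      ((k : ℝ) / ((k : ℝ) + 1) - Real.exp 3 / (2 * (k : ℝ) + 1) ≤ (k : ℝ) * ε k / w k ∧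
        (k : ℝ) * ε k / w k ≤ Real.exp (Real.exp 2 / (k : ℝ))) := by
    intro k hk
    have hk7 : (7 : ℝ) ≤ (k : ℝ) := by exact_mod_cast hk
    obtain ⟨hw0, hw1⟩ := hw k (by omega)
    obtain ⟨hε0, hεI⟩ := hε k (by omega)
    have hK0 : (0 : ℝ) < (k : ℝ) := by linarith
    -- Step 1: ε k ≤ 1/k
    have hεle : ε k ≤ 1 / (k : ℝ) := by
      by_contra h
      push_neg at h
      have hsplit : (∫ v in (0:ℝ)..(1 + 1/(k:ℝ)), Real.exp (-(w k) * v ^ k)) +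
          (∫ v in (1 + 1/(k:ℝ))..(1 + ε k), Real.exp (-(w k) * v ^ k)) = 1 := by
        rw [intervalIntegral.integral_add_adjacent_intervals (contInt (w k) k _ _)
          (contInt (w k) k _ _)]
        exact hεI
      have hP' : (1 + 1/(k:ℝ)) ^ (k + 1) ≤ Real.exp 2 := by
        refine le_trans (pow_le_exp (1/(k:ℝ)) (by positivity) (k+1)) ?_
        rw [Real.exp_le_exp]
        push_cast
        rw [mul_one_div, div_le_iff₀ hK0]
        linarith
      have hple : w k * (1 + 1/(k:ℝ)) ^ (k + 1) / ((k:ℝ) + 1) ≤ 1 / (k:ℝ) := by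
        rw [div_le_iff₀ (by linarith : (0:ℝ) < (k:ℝ) + 1)]
        have h1 : w k * (1 + 1/(k:ℝ)) ^ (k + 1) ≤ (1/(k:ℝ)) * ((k:ℝ) + 1) :=
          mul_le_mul hw1 (by linarith) (by positivity) (by positivity)
        linarith
      have h1 : 1 ≤ ∫ v in (0:ℝ)..(1 + 1/(k:ℝ)), Real.exp (-(w k) * v ^ k) := by
        have hGL := G_lower (w k) (1 + 1/(k:ℝ)) k (by positivity)
        linarith
      have h2 : 0 < ∫ v in (1 + 1/(k:ℝ))..(1 + ε k), Real.exp (-(w k) * v ^ k) :=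
        intervalIntegral_pos_of_pos_on (contInt (w k) k _ _)
          (fun x _ => Real.exp_pos _) (by linarith)
      linarith
    have hε1 : 0 ≤ ε k := hε0.le
    have hP1 : (1:ℝ) ≤ (1 + ε k) ^ (k + 1) := one_le_pow₀ (by linarith)
    have hεK : ε k * (k:ℝ) ≤ 1 := (le_div_iff₀ hK0).mp hεle
    -- Step 2: crude bound (1+ε)^(k+1) ≤ exp 2
    have hPexp2 : (1 + ε k) ^ (k + 1) ≤ Real.exp 2 := by
      refine le_trans (pow_le_exp (ε k) hε1 (k+1)) ?_
      rw [Real.exp_le_exp]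
      push_cast
      nlinarith
    have hQ : (1 + ε k) ^ (2 * k + 1) ≤ Real.exp 3 := by
      refine le_trans (pow_le_exp (ε k) hε1 (2*k+1)) ?_
      rw [Real.exp_le_exp]
      push_cast
      nlinarith
    have hQ0 : (0:ℝ) ≤ (1 + ε k) ^ (2 * k + 1) := by positivity
    have hKw : (k:ℝ) * w k ≤ 1 := by
      have := (le_div_iff₀ hK0).mp hw1
      linarith [this, mul_comm (w k) (k:ℝ)]
    -- From G_lower at z = 1 + ε k : ε ≤ w P / (k+1)
    have hGL := G_lower (w k) (1 + ε k) k (by linarith)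
    rw [hεI] at hGL
    have hA : ε k ≤ w k * (1 + ε k) ^ (k + 1) / ((k:ℝ) + 1) := by linarith
    have hA' : ((k:ℝ) + 1) * ε k ≤ w k * (1 + ε k) ^ (k + 1) := by
      have := (le_div_iff₀ (by linarith : (0:ℝ) < (k:ℝ) + 1)).mp hA
      linarith [mul_comm (ε k) ((k:ℝ) + 1)]
    -- From G_upper at z = 1 + ε k
    have hGU := G_upper (w k) (1 + ε k) k hw0.le (by linarith)
    rw [hεI] at hGU
    have hB : w k * (1 + ε k) ^ (k + 1) / ((k:ℝ) + 1)
        - w k ^ 2 * (1 + ε k) ^ (2 * k + 1) / (2 * (k:ℝ) + 1) ≤ ε k := by linarith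
    constructor
    · -- lower bound
      rw [le_div_iff₀ hw0]
      set a := w k * (1 + ε k) ^ (k + 1) / ((k:ℝ) + 1) with ha
      set b := w k ^ 2 * (1 + ε k) ^ (2 * k + 1) / (2 * (k:ℝ) + 1) with hb
      have haw : w k / ((k:ℝ) + 1) ≤ a := by
        rw [ha]
        gcongr
        exact le_mul_of_one_le_right hw0.le hP1
      have hbw : (k:ℝ) * b ≤ w k * Real.exp 3 / (2 * (k:ℝ) + 1) := by
        rw [hb, mul_div_assoc']
        have hwQ : w k * (1 + ε k) ^ (2 * k + 1) ≤ w k * Real.exp 3 :=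
          mul_le_mul_of_nonneg_left hQ hw0.le
        have h6 : ((k:ℝ) * w k) * (w k * (1 + ε k) ^ (2 * k + 1)) ≤ 1 * (w k * Real.exp 3) :=
          mul_le_mul hKw hwQ (mul_nonneg hw0.le hQ0) zero_le_one
        gcongr ?_ / _
        nlinarith [h6]
      have hεb : (k:ℝ) * (a - b) ≤ (k:ℝ) * ε k := mul_le_mul_of_nonneg_left hB hK0.le
      have haK : (k:ℝ) * (w k / ((k:ℝ) + 1)) ≤ (k:ℝ) * a := mul_le_mul_of_nonneg_left haw hK0.le
      have e1 : ((k:ℝ) / ((k:ℝ) + 1) - Real.exp 3 / (2 * (k:ℝ) + 1)) * w k =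
          (k:ℝ) * (w k / ((k:ℝ) + 1)) - w k * Real.exp 3 / (2 * (k:ℝ) + 1) := by ring
      have e2 : (k:ℝ) * (a - b) = (k:ℝ) * a - (k:ℝ) * b := by ring
      linarith
    · -- upper bound
      rw [div_le_iff₀ hw0]
      have hP2 : (1 + ε k) ^ (k + 1) ≤ Real.exp (Real.exp 2 / (k:ℝ)) := by
        refine le_trans (pow_le_exp (ε k) hε1 (k+1)) ?_
        rw [Real.exp_le_exp]
        push_cast
        have h3 : w k * (1 + ε k) ^ (k + 1) ≤ w k * Real.exp 2 :=
          mul_le_mul_of_nonneg_left hPexp2 hw0.le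
        have h4 : w k * Real.exp 2 ≤ Real.exp 2 / (k:ℝ) := by
          rw [le_div_iff₀ hK0]
          nlinarith [Real.exp_pos (2:ℝ)]
        linarith
      have h5 : w k * (1 + ε k) ^ (k + 1) ≤ w k * Real.exp (Real.exp 2 / (k:ℝ)) :=
        mul_le_mul_of_nonneg_left hP2 hw0.le
      have e3 : ((k:ℝ) + 1) * ε k = (k:ℝ) * ε k + ε k := by ring
      linarith
  apply tendsto_of_tendsto_of_tendsto_of_le_of_le'
    (g := fun k : ℕ => (k : ℝ) / ((k : ℝ) + 1) - Real.exp 3 / (2 * (k : ℝ) + 1))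
    (h := fun k : ℕ => Real.exp (Real.exp 2 / (k : ℝ)))
  · have h1 := tendsto_natCast_div_add_atTop (1 : ℝ)
    have h2K : Tendsto (fun k : ℕ => 2 * (k : ℝ) + 1) atTop atTop :=
      tendsto_atTop_add_const_right _ 1
        ((tendsto_natCast_atTop_atTop).const_mul_atTop two_pos)
    have h2 : Tendsto (fun k : ℕ => Real.exp 3 / (2 * (k : ℝ) + 1)) atTop (nhds 0) :=
      Tendsto.div_atTop tendsto_const_nhds h2K
    simpa using h1.sub h2
  · have h1 : Tendsto (fun k : ℕ => Real.exp 2 / (k : ℝ)) atTop (nhds 0) :=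
      Tendsto.div_atTop tendsto_const_nhds tendsto_natCast_atTop_atTop
    simpa [Function.comp_def] using (Real.continuous_exp.tendsto 0).comp h1
  · filter_upwards [eventually_ge_atTop 7] with k hk using (key k hk).1
  · filter_upwards [eventually_ge_atTop 7] with k hk using (key k hk).2
end

section
/- Let k ≥ 1 be an integer, w > 0 a real number, and define R_{k,w}(z) = Σ_{ℓ=1}^∞ (-w)^ℓ · z^{ℓk+1} / ((ℓk+1) · ℓ!) for complex z. Then for every complex z with |z| ≤ 1 + 1/k one has |R_{k,w}(z)| ≤ (1/k) · (exp(w·|z|^k) - 1). -/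
/-- For `k ≥ 1`, `w > 0` and complex `z` with `|z| ≤ 1 + 1/k`, the tail
`R(z) = Σ_{ℓ≥1} (-w)^ℓ z^(ℓk+1)/((ℓk+1)·ℓ!)` satisfies
`|R(z)| ≤ (1/k)(exp(w |z|^k) - 1)`. -/
theorem stmt4 (k : ℕ) (hk : 1 ≤ k) (w : ℝ) (hw : 0 < w) (z : ℂ)
    (hz : ‖z‖ ≤ 1 + 1 / k) :
    ‖∑' ℓ : ℕ, ((-w : ℂ)) ^ (ℓ + 1) * z ^ ((ℓ + 1) * k + 1) /
        ((((ℓ + 1) * k + 1 : ℕ) : ℂ) * (Nat.factorial (ℓ + 1) : ℂ))‖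
      ≤ (1 / k) * (Real.exp (w * ‖z‖ ^ k) - 1) := by
  have hk0 : (0:ℝ) < (k:ℝ) := by exact_mod_cast hk
  set a : ℝ := ‖z‖ with ha
  have ha0 : 0 ≤ a := norm_nonneg z
  set x : ℝ := w * a ^ k with hxdef
  have hx0 : 0 ≤ x := by positivity
  have hg : Summable (fun n : ℕ => x ^ n / n.factorial) :=
    Real.summable_pow_div_factorial x
  have hsum : Summable (fun n : ℕ => x ^ (n+1) / (n+1).factorial) :=
    (summable_nat_add_iff 1).2 hg
  set f : ℕ → ℂ := fun ℓ => ((-w : ℂ)) ^ (ℓ + 1) * z ^ ((ℓ + 1) * k + 1) /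
        ((((ℓ + 1) * k + 1 : ℕ) : ℂ) * (Nat.factorial (ℓ + 1) : ℂ)) with hf
  have habsw : ‖(-(w:ℂ))‖ = w := by
    simp [abs_of_pos hw]
  have hbound : ∀ n : ℕ, ‖f n‖ ≤ (1/(k:ℝ)) * (x ^ (n+1) / (n+1).factorial) := by
    intro n
    have hnorm : ‖f n‖ = w ^ (n+1) * a ^ ((n+1)*k+1) /
        ((((n+1)*k+1 : ℕ) : ℝ) * ((n+1).factorial : ℝ)) := by
      simp only [hf, norm_div, norm_mul, norm_pow, habsw,
        Complex.norm_natCast, ← ha]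
    rw [hnorm]
    have hden : (0:ℝ) < (((n+1)*k+1 : ℕ) : ℝ) := by positivity
    have hfac : (0:ℝ) < ((n+1).factorial : ℝ) := by positivity
    have hxpow : x ^ (n+1) = w ^ (n+1) * a ^ ((n+1)*k) := by
      rw [hxdef, mul_pow, ← pow_mul]
      ring_nf
    rw [hxpow]
    have key : a / (((n+1)*k+1 : ℕ) : ℝ) ≤ 1 / (k:ℝ) := by
      rw [div_le_div_iff₀ hden hk0]
      have : (k:ℝ) * a ≤ (k:ℝ) + 1 := by
        calc (k:ℝ) * a ≤ (k:ℝ) * (1 + 1/(k:ℝ)) := by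
              exact mul_le_mul_of_nonneg_left hz (le_of_lt hk0)
          _ = (k:ℝ) + 1 := by field_simp
      have hle : (k:ℝ) + 1 ≤ (((n+1)*k+1 : ℕ) : ℝ) := by
        push_cast
        have hn0 : (0:ℝ) ≤ (n:ℝ) := Nat.cast_nonneg n
        nlinarith [hk0]
      linarith
    calc w ^ (n+1) * a ^ ((n+1)*k+1) / ((((n+1)*k+1 : ℕ) : ℝ) * ((n+1).factorial : ℝ))
        = (w ^ (n+1) * a ^ ((n+1)*k) / ((n+1).factorial : ℝ)) *
            (a / (((n+1)*k+1 : ℕ) : ℝ)) := by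
          rw [pow_succ]
          field_simp
          ring
      _ ≤ (w ^ (n+1) * a ^ ((n+1)*k) / ((n+1).factorial : ℝ)) * (1 / (k:ℝ)) := by
          apply mul_le_mul_of_nonneg_left key
          positivity
      _ = 1/(k:ℝ) * (w ^ (n+1) * a ^ ((n+1)*k) / (n+1).factorial) := by ring
  have hsumf : Summable (fun n => ‖f n‖) := by
    apply Summable.of_nonneg_of_le (fun n => norm_nonneg _) hbound
    exact hsum.mul_left _
  have h1 : ‖∑' ℓ, f ℓ‖ ≤ ∑' n, ‖f n‖ := by
    exact norm_tsum_le_tsum_norm hsumf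
  have h2 : ∑' n, ‖f n‖ ≤ ∑' n, (1/(k:ℝ)) * (x ^ (n+1) / (n+1).factorial) :=
    Summable.tsum_le_tsum hbound hsumf (hsum.mul_left _)
  have h3 : ∑' n : ℕ, x ^ (n+1) / (n+1).factorial = Real.exp x - 1 := by
    have hexp : ∑' n : ℕ, x ^ n / n.factorial = Real.exp x := by
      rw [Real.exp_eq_exp_ℝ, NormedSpace.exp_eq_tsum_div]
    have h0 := Summable.tsum_eq_zero_add (f := fun n : ℕ => x ^ n / n.factorial) hg
    simp only [pow_zero, Nat.factorial_zero, Nat.cast_one, div_one] at h0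
    rw [hexp] at h0
    linarith
  have h4 : ∑' n : ℕ, (1/(k:ℝ)) * (x ^ (n+1) / (n+1).factorial)
      = (1/(k:ℝ)) * (Real.exp x - 1) := by
    rw [tsum_mul_left, h3]
  calc ‖∑' ℓ, f ℓ‖ ≤ ∑' n, ‖f n‖ := h1
    _ ≤ ∑' n, (1/(k:ℝ)) * (x ^ (n+1) / (n+1).factorial) := h2
    _ = (1/(k:ℝ)) * (Real.exp x - 1) := h4
end

section
/- There exists an integer D such that for all integers k ≥ D and all real w with 0 < w ≤ 1/k the following holds: if z₀ is a complex number with Σ_{ℓ=0}^∞ (-w)^ℓ z₀^{ℓk+1}/((ℓk+1)·ℓ!) = 1 and |z₀| ≤ 1 + (ln k + ln ln ln k)/k, then z₀ = ρ̃, where ρ̃ is the unique real number in (1, 1 + 2w/k) with ∫_0^{ρ̃} exp(-w v^k) dv = 1. In other words, every complex zero of G_{k,w}(z) - 1 other than ρ̃ has modulus greater than 1 + (ln k + ln ln ln k)/k. -/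
open scoped Nat

namespace Stmt5Aux

noncomputable def f (w : ℝ) (k : ℕ) (z : ℂ) (ℓ : ℕ) : ℂ :=
  (-w : ℂ) ^ ℓ * z ^ (ℓ * k + 1) / (((ℓ * k + 1 : ℕ) : ℂ) * (Nat.factorial ℓ : ℂ))

lemma norm_f (w : ℝ) (hw : 0 ≤ w) (k : ℕ) (z : ℂ) (ℓ : ℕ) :
    ‖f w k z ℓ‖ = w ^ ℓ * ‖z‖ ^ (ℓ * k + 1) / (((ℓ * k + 1 : ℕ) : ℝ) * (ℓ ! : ℝ)) := by
  simp only [f, norm_div, norm_mul, norm_pow, norm_neg,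
    Complex.norm_real, Real.norm_eq_abs, abs_of_nonneg hw, Complex.norm_natCast]

lemma norm_f_le {w r : ℝ} (hw : 0 ≤ w) {k : ℕ} {z : ℂ} (hz : ‖z‖ ≤ r) (ℓ : ℕ) :
    ‖f w k z ℓ‖ ≤ r * ((w * r ^ k) ^ ℓ / (ℓ ! : ℝ)) := by
  have hr : 0 ≤ r := le_trans (norm_nonneg z) hz
  rw [norm_f w hw]
  have h1 : ‖z‖ ^ (ℓ * k + 1) ≤ r ^ (ℓ * k + 1) :=
    pow_le_pow_left₀ (norm_nonneg z) hz _
  have h2 : ((1 : ℝ)) ≤ ((ℓ * k + 1 : ℕ) : ℝ) := by exact_mod_cast Nat.one_le_iff_ne_zero.2 (by omega)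
  have hfac : (0:ℝ) < (ℓ ! : ℝ) := by exact_mod_cast Nat.factorial_pos ℓ
  have key : w ^ ℓ * ‖z‖ ^ (ℓ * k + 1) / (((ℓ * k + 1 : ℕ) : ℝ) * (ℓ ! : ℝ))
      ≤ w ^ ℓ * r ^ (ℓ * k + 1) / (1 * (ℓ ! : ℝ)) := by
    gcongr <;> positivity
  refine key.trans (le_of_eq ?_)
  rw [one_mul, pow_succ' r, pow_mul', mul_pow]
  ring

lemma summable_f {w : ℝ} (hw : 0 ≤ w) (k : ℕ) (z : ℂ) : Summable (f w k z) := by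
  refine Summable.of_norm_bounded
    ((Real.summable_pow_div_factorial (w * ‖z‖ ^ k)).mul_left ‖z‖) ?_
  exact norm_f_le hw le_rfl

lemma exp_hasSum (y : ℝ) : HasSum (fun n : ℕ => y ^ n / (n ! : ℝ)) (Real.exp y) := by
  have h : Real.exp y = ∑' n : ℕ, y ^ n / (n ! : ℝ) := by
    rw [Real.exp_eq_exp_ℝ, NormedSpace.exp_eq_tsum_div]
  rw [h]
  exact (Real.summable_pow_div_factorial y).hasSum

lemma exp_shift_hasSum (y : ℝ) :
    HasSum (fun n : ℕ => y ^ (n + 1) / ((n + 1)! : ℝ)) (Real.exp y - 1) := by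
  refine (hasSum_nat_add_iff (f := fun n : ℕ => y ^ n / (n ! : ℝ)) 1).2 ?_
  simpa using exp_hasSum y

lemma tsum_sub_head_le {u : ℕ → ℂ} {C y : ℝ} (hu : Summable u)
    (h : ∀ ℓ : ℕ, ‖u (ℓ + 1)‖ ≤ C * (y ^ (ℓ + 1) / ((ℓ + 1)! : ℝ))) :
    ‖(∑' ℓ, u ℓ) - u 0‖ ≤ C * (Real.exp y - 1) := by
  have h1 : (∑' ℓ, u ℓ) - u 0 = ∑' ℓ, u (ℓ + 1) := by
    rw [Summable.tsum_eq_zero_add hu]; ring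
  rw [h1]
  exact tsum_of_norm_bounded ((exp_shift_hasSum y).mul_left C) h


lemma sq_log_le_quarter {K : ℝ} (hK : 4096 ≤ K) : (Real.log K) ^ 2 ≤ K / 4 := by
  have hK0 : (0:ℝ) < K := by linarith
  have h1 : Real.log K = 4 * Real.log (K ^ ((4:ℝ)⁻¹)) := by
    rw [Real.log_rpow hK0]; ring
  have hq0 : (0:ℝ) < K ^ ((4:ℝ)⁻¹) := Real.rpow_pos_of_pos hK0 _
  have hq1 : (1:ℝ) ≤ K ^ ((4:ℝ)⁻¹) :=
    Real.one_le_rpow (by linarith) (by norm_num)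
  have h2 : Real.log (K ^ ((4:ℝ)⁻¹)) ≤ K ^ ((4:ℝ)⁻¹) :=
    (Real.log_le_sub_one_of_pos hq0).trans (by linarith)
  have h0 : 0 ≤ Real.log (K ^ ((4:ℝ)⁻¹)) := Real.log_nonneg hq1
  have h3 : (Real.log K) ^ 2 ≤ 16 * (K ^ ((4:ℝ)⁻¹)) ^ 2 := by
    rw [h1]; nlinarith
  have h4 : (K ^ ((4:ℝ)⁻¹)) ^ 2 = K ^ ((2:ℝ)⁻¹) := by
    rw [← Real.rpow_natCast (K ^ ((4:ℝ)⁻¹)) 2, ← Real.rpow_mul hK0.le]; norm_num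
  have h5 : K ^ ((2:ℝ)⁻¹) * K ^ ((2:ℝ)⁻¹) = K := by
    rw [← Real.rpow_add hK0]; norm_num
  have h6 : (64:ℝ) ≤ K ^ ((2:ℝ)⁻¹) := by
    have ha : (4096:ℝ) ^ ((2:ℝ)⁻¹) ≤ K ^ ((2:ℝ)⁻¹) :=
      Real.rpow_le_rpow (by norm_num) hK (by norm_num)
    have hb : (4096:ℝ) ^ ((2:ℝ)⁻¹) = 64 := by
      rw [show (4096:ℝ) = 64 ^ (2:ℕ) by norm_num,
        ← Real.rpow_natCast (64:ℝ) 2, ← Real.rpow_mul (by norm_num : (0:ℝ) ≤ 64)]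
      norm_num
    linarith
  have h7 : (0:ℝ) < K ^ ((2:ℝ)⁻¹) := Real.rpow_pos_of_pos hK0 _
  nlinarith

lemma real_tsum_eq_one {w ρ : ℝ} {k : ℕ} (hw : 0 ≤ w) (hρ : 0 < ρ)
    (hint : (∫ v in (0:ℝ)..ρ, Real.exp (-w * v ^ k)) = 1) :
    ∑' ℓ : ℕ, (-w) ^ ℓ * ρ ^ (ℓ * k + 1) / (((ℓ * k + 1 : ℕ) : ℝ) * (ℓ ! : ℝ)) = 1 := by
  set F : ℕ → ℝ → ℝ := fun ℓ v => (-w) ^ ℓ * v ^ (ℓ * k) / (ℓ ! : ℝ) with hF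
  have hcont : ∀ ℓ, Continuous (F ℓ) := by
    intro ℓ; simp only [hF]; continuity
  have hFint : ∀ ℓ, MeasureTheory.IntegrableOn (F ℓ) (Set.Ioc 0 ρ) := fun ℓ =>
    (hcont ℓ).integrableOn_Ioc
  -- value of each integral
  have hval : ∀ ℓ, (∫ v in Set.Ioc (0:ℝ) ρ, F ℓ v) =
      (-w) ^ ℓ * ρ ^ (ℓ * k + 1) / (((ℓ * k + 1 : ℕ) : ℝ) * (ℓ ! : ℝ)) := by
    intro ℓ
    rw [← intervalIntegral.integral_of_le hρ.le]
    simp only [hF]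
    rw [intervalIntegral.integral_div, intervalIntegral.integral_const_mul, integral_pow]
    have h0 : (0:ℝ) ^ (ℓ * k + 1) = 0 := zero_pow (by omega)
    have hc : ((ℓ * k + 1 : ℕ) : ℝ) = (ℓ : ℝ) * k + 1 := by push_cast; ring
    have hfac : ((ℓ ! : ℝ)) ≠ 0 := by
      have := Nat.factorial_pos ℓ; positivity
    have hn : ((ℓ : ℝ) * k + 1) ≠ 0 := by positivity
    rw [h0, hc]
    field_simp
    push_cast; ring
  -- summability of norms of integrals
  have hnorm : ∀ ℓ, (∫ v in Set.Ioc (0:ℝ) ρ, ‖F ℓ v‖) ≤ ρ * ((w * ρ ^ k) ^ ℓ / (ℓ ! : ℝ)) := by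
    intro ℓ
    have hb : ∀ v ∈ Set.Ioc (0:ℝ) ρ, ‖F ℓ v‖ ≤ (w * ρ ^ k) ^ ℓ / (ℓ ! : ℝ) := by
      intro v hv
      have hv0 : 0 ≤ v := hv.1.le
      have hfac : (0:ℝ) < (ℓ ! : ℝ) := by exact_mod_cast Nat.factorial_pos ℓ
      have : ‖F ℓ v‖ = w ^ ℓ * v ^ (ℓ * k) / (ℓ ! : ℝ) := by
        simp only [hF]
        rw [Real.norm_eq_abs, abs_div, abs_mul, abs_pow, abs_pow, abs_neg,
          abs_of_nonneg hw, abs_of_nonneg hv0, abs_of_nonneg hfac.le]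
      rw [this, mul_pow]
      gcongr
      calc v ^ (ℓ * k) ≤ ρ ^ (ℓ * k) := by gcongr; exact hv.2
        _ = (ρ ^ k) ^ ℓ := by rw [← pow_mul, mul_comm]
    calc (∫ v in Set.Ioc (0:ℝ) ρ, ‖F ℓ v‖)
        ≤ ∫ _ in Set.Ioc (0:ℝ) ρ, ((w * ρ ^ k) ^ ℓ / (ℓ ! : ℝ)) :=
          MeasureTheory.setIntegral_mono_on ((hFint ℓ).norm)
            (MeasureTheory.integrableOn_const measure_Ioc_lt_top.ne)
            measurableSet_Ioc hb
      _ = ρ * ((w * ρ ^ k) ^ ℓ / (ℓ ! : ℝ)) := by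
          rw [MeasureTheory.setIntegral_const, MeasureTheory.measureReal_def, Real.volume_Ioc, smul_eq_mul,
            ENNReal.toReal_ofReal (by linarith)]
          ring
  have hsummable : Summable (fun ℓ => ∫ v in Set.Ioc (0:ℝ) ρ, ‖F ℓ v‖) :=
    Summable.of_nonneg_of_le
      (fun ℓ => MeasureTheory.integral_nonneg (fun v => norm_nonneg _)) hnorm
      ((Real.summable_pow_div_factorial (w * ρ ^ k)).mul_left ρ)
  have hswap := MeasureTheory.integral_tsum_of_summable_integral_norm hFint hsummable
  have hpt : ∀ v : ℝ, (∑' ℓ, F ℓ v) = Real.exp (-w * v ^ k) := by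
    intro v
    have h1 : Real.exp (-w * v ^ k) = ∑' n : ℕ, (-w * v ^ k) ^ n / (n ! : ℝ) :=
      (exp_hasSum (-w * v ^ k)).tsum_eq.symm
    rw [h1]
    refine tsum_congr fun ℓ => ?_
    simp only [hF]
    rw [mul_pow, ← pow_mul, mul_comm k ℓ]
  calc ∑' ℓ : ℕ, (-w) ^ ℓ * ρ ^ (ℓ * k + 1) / (((ℓ * k + 1 : ℕ) : ℝ) * (ℓ ! : ℝ))
      = ∑' ℓ : ℕ, ∫ v in Set.Ioc (0:ℝ) ρ, F ℓ v := by
        refine tsum_congr fun ℓ => ?_; rw [hval ℓ]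
    _ = ∫ v in Set.Ioc (0:ℝ) ρ, (∑' ℓ, F ℓ v) := hswap
    _ = ∫ v in Set.Ioc (0:ℝ) ρ, Real.exp (-w * v ^ k) := by
        refine MeasureTheory.setIntegral_congr_fun measurableSet_Ioc fun v _ => hpt v
    _ = ∫ v in (0:ℝ)..ρ, Real.exp (-w * v ^ k) := (intervalIntegral.integral_of_le hρ.le).symm
    _ = 1 := hint

end Stmt5Aux

set_option maxHeartbeats 1000000 in
/-- There is `D` such that for all `k ≥ D` and `0 < w ≤ 1/k`: if `ρ̃` is the unique
real in `(1, 1 + 2w/k)` with `∫_0^{ρ̃} exp(-w v^k) dv = 1`, then every complex solution `z₀` of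
`Σ_{ℓ≥0} (-w)^ℓ z₀^(ℓk+1)/((ℓk+1)·ℓ!) = 1` with `|z₀| ≤ 1 + (ln k + ln ln ln k)/k` equals `ρ̃`. -/
theorem stmt5 : ∃ D : ℕ, ∀ k : ℕ, D ≤ k → ∀ w : ℝ, 0 < w → w ≤ 1 / k →
    ∀ ρ : ℝ, 1 < ρ → ρ < 1 + 2 * w / k →
      (∫ v in (0:ℝ)..ρ, Real.exp (-w * v ^ k)) = 1 →
    ∀ z₀ : ℂ,
      (∑' ℓ : ℕ, ((-w : ℂ)) ^ ℓ * z₀ ^ (ℓ * k + 1) /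
        (((ℓ * k + 1 : ℕ) : ℂ) * (Nat.factorial ℓ : ℂ))) = 1 →
      ‖z₀‖ ≤ 1 + (Real.log k + Real.log (Real.log (Real.log k))) / k →
      z₀ = (ρ : ℂ) := by
  classical
  refine ⟨100000000, ?_⟩
  intro k hk w hw hwk ρ hρ1 hρ2 hint z₀ hz₀sum hz₀abs
  obtain ⟨K, hKdef⟩ : ∃ K : ℝ, K = (k : ℝ) := ⟨_, rfl⟩
  have hwK : w ≤ 1 / K := by rw [hKdef]; exact hwk
  have hρ2' : ρ < 1 + 2 * w / K := by rw [hKdef]; exact hρ2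
  have hK : (100000000 : ℝ) ≤ K := by rw [hKdef]; exact_mod_cast hk
  have hK0 : (0:ℝ) < K := by linarith
  have hKne : K ≠ 0 := ne_of_gt hK0
  obtain ⟨A, hAdef⟩ : ∃ A : ℝ, A = Real.log K := ⟨_, rfl⟩
  have hA : 18 ≤ A := by
    rw [hAdef, Real.le_log_iff_exp_le hK0]
    have e18 : Real.exp 18 ≤ (2.7182818286:ℝ) ^ (18:ℕ) := by
      rw [show (18:ℝ) = (18:ℕ) * 1 by norm_num, Real.exp_nat_mul]
      exact pow_le_pow_left₀ (Real.exp_pos 1).le Real.exp_one_lt_d9.le 18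
    have e2 : (2.7182818286:ℝ) ^ (18:ℕ) ≤ 100000000 := by norm_num
    linarith
  obtain ⟨B, hBdef⟩ : ∃ B : ℝ, B = Real.log A := ⟨_, rfl⟩
  have hB1 : (1:ℝ) ≤ B := by
    rw [hBdef, Real.le_log_iff_exp_le (by linarith : (0:ℝ) < A)]
    calc Real.exp 1 ≤ 2.7182818286 := Real.exp_one_lt_d9.le
      _ ≤ A := by linarith
  have hB0 : (0:ℝ) < B := by linarith
  obtain ⟨L, hLdef⟩ : ∃ L : ℝ, L = A + Real.log B := ⟨_, rfl⟩
  have hlogB0 : (0:ℝ) ≤ Real.log B := Real.log_nonneg hB1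
  have hlogBle : Real.log B ≤ A := by
    have h1 : Real.log B ≤ B - 1 := Real.log_le_sub_one_of_pos hB0
    have h2 : B ≤ A - 1 := by
      have := Real.log_le_sub_one_of_pos (show (0:ℝ) < A by linarith)
      rw [hBdef]; linarith
    linarith
  have hL0 : (0:ℝ) ≤ L := by rw [hLdef]; linarith
  have hL2A : L ≤ 2 * A := by rw [hLdef]; linarith
  obtain ⟨R, hRdef⟩ : ∃ R : ℝ, R = 1 + L / K := ⟨_, rfl⟩
  have hR1 : (1:ℝ) ≤ R := by
    rw [hRdef]; have := div_nonneg hL0 hK0.le; linarith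
  have hRpos : (0:ℝ) < R := by linarith
  have hz₀R : ‖z₀‖ ≤ R := by
    rw [hRdef, hLdef, hBdef, hAdef, hKdef]; exact hz₀abs
  -- R^k ≤ K * B
  have hexpL : Real.exp L = K * B := by
    rw [hLdef, Real.exp_add, hAdef, Real.exp_log hK0, Real.exp_log hB0]
  have hRk : R ^ k ≤ K * B := by
    have h1 : R ≤ Real.exp (L / K) := by
      have := Real.add_one_le_exp (L / K); rw [hRdef]; linarith
    calc R ^ k ≤ Real.exp (L / K) ^ k := pow_le_pow_left₀ hRpos.le h1 k
      _ = Real.exp ((k:ℝ) * (L / K)) := (Real.exp_nat_mul _ k).symm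
      _ = Real.exp L := by rw [show (k:ℝ) * (L / K) = L by rw [← hKdef]; field_simp]
      _ = K * B := hexpL
  obtain ⟨x, hxdef⟩ : ∃ x : ℝ, x = w * R ^ k := ⟨_, rfl⟩
  have hx0 : (0:ℝ) ≤ x := by rw [hxdef]; exact mul_nonneg hw.le (pow_nonneg hRpos.le k)
  have hxB : x ≤ B := by
    have h := mul_le_mul hwK hRk (pow_nonneg hRpos.le k)
      (by positivity : (0:ℝ) ≤ 1/K)
    have h2 : 1/K * (K*B) = B := by field_simp
    rw [hxdef]
    linarith
  -- step 1 : z₀ is near 1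
  have hsumz : (∑' ℓ, Stmt5Aux.f w k z₀ ℓ) = 1 := hz₀sum
  have hf0 : Stmt5Aux.f w k z₀ 0 = z₀ := by simp [Stmt5Aux.f]
  have hstep1 : ‖z₀ - 1‖ ≤ R / K * (Real.exp x - 1) := by
    have hb : ∀ ℓ : ℕ, ‖Stmt5Aux.f w k z₀ (ℓ+1)‖ ≤
        (R / K) * (x ^ (ℓ+1) / (((ℓ+1)! : ℕ) : ℝ)) := by
      intro ℓ
      rw [Stmt5Aux.norm_f w hw.le]
      have hk1 : 1 ≤ k := by omega
      have hnk : K ≤ (((ℓ+1) * k + 1 : ℕ) : ℝ) := by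
        rw [hKdef]
        exact_mod_cast Nat.le_succ_of_le (Nat.le_mul_of_pos_left k (by omega))
      have h1 : ‖z₀‖ ^ ((ℓ+1) * k + 1) ≤ R ^ ((ℓ+1) * k + 1) :=
        pow_le_pow_left₀ (norm_nonneg _) hz₀R _
      have hfacpos : (0:ℝ) < (((ℓ+1)! : ℕ) : ℝ) := by
        exact_mod_cast Nat.factorial_pos (ℓ+1)
      calc w ^ (ℓ+1) * ‖z₀‖ ^ ((ℓ+1) * k + 1) / ((((ℓ+1) * k + 1 : ℕ) : ℝ) * (((ℓ+1)! : ℕ) : ℝ))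
          ≤ w ^ (ℓ+1) * R ^ ((ℓ+1) * k + 1) / (K * (((ℓ+1)! : ℕ) : ℝ)) := by
            gcongr <;> positivity
        _ = (R / K) * (x ^ (ℓ+1) / (((ℓ+1)! : ℕ) : ℝ)) := by
            rw [hxdef, mul_pow, show R ^ ((ℓ+1) * k + 1) = R * (R ^ k) ^ (ℓ+1) by
              rw [← pow_mul, mul_comm k (ℓ+1), pow_succ']
            ]
            field_simp
    have htail := Stmt5Aux.tsum_sub_head_le (Stmt5Aux.summable_f hw.le k z₀) hb
    rw [hsumz, hf0] at htail
    calc ‖z₀ - 1‖ = ‖(1:ℂ) - z₀‖ := norm_sub_rev _ _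
      _ ≤ R / K * (Real.exp x - 1) := htail
  have hexpxA : Real.exp x ≤ A := by
    calc Real.exp x ≤ Real.exp B := Real.exp_le_exp.2 hxB
      _ = A := by rw [hBdef, Real.exp_log (by linarith : (0:ℝ) < A)]
  have hA2 : A ^ 2 ≤ K / 4 := by
    rw [hAdef]; exact Stmt5Aux.sq_log_le_quarter (by linarith)
  obtain ⟨r, hrdef⟩ : ∃ r : ℝ, r = 1 + (A - 1/2) / K := ⟨_, rfl⟩
  have hr1 : (1:ℝ) ≤ r := by
    rw [hrdef]
    have : (0:ℝ) ≤ (A - 1/2)/K := div_nonneg (by linarith) hK0.le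
    linarith
  have hr0 : (0:ℝ) < r := by linarith
  have hz₀r : ‖z₀‖ ≤ r := by
    have h1 : ‖z₀‖ ≤ 1 + ‖z₀ - 1‖ := by
      calc ‖z₀‖ = ‖1 + (z₀ - 1)‖ := by ring_nf
        _ ≤ ‖(1:ℂ)‖ + ‖z₀ - 1‖ := norm_add_le _ _
        _ = 1 + ‖z₀ - 1‖ := by rw [norm_one]
    have hRle : R ≤ 1 + 2*A/K := by
      rw [hRdef]
      have : L/K ≤ 2*A/K := by gcongr
      linarith
    have e0 : (0:ℝ) ≤ Real.exp x - 1 := by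
      have := Real.add_one_le_exp x; linarith
    have e1 : Real.exp x - 1 ≤ A - 1 := by linarith
    have h2A : (0:ℝ) ≤ 2*A/K := div_nonneg (by linarith) hK0.le
    have hm : R * (Real.exp x - 1) ≤ (1 + 2*A/K) * (A - 1) :=
      mul_le_mul hRle e1 e0 (by linarith)
    have h2AK : 2*A/K*(A-1) ≤ 1/2 := by
      rw [div_mul_eq_mul_div, div_le_iff₀ hK0]
      nlinarith [hA2, hA]
    have hexpand : (1 + 2*A/K) * (A - 1) = (A-1) + 2*A/K*(A-1) := by ring
    have hRx : R * (Real.exp x - 1) ≤ A - 1/2 := by linarith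
    have hfin : R / K * (Real.exp x - 1) ≤ (A - 1/2)/K := by
      rw [div_mul_eq_mul_div]
      gcongr
    rw [hrdef]
    linarith [hstep1]
  have hρ0 : (0:ℝ) < ρ := by linarith
  have hρr : ρ ≤ r := by
    have hw1 : 2*w ≤ A - 1/2 := by
      have : w ≤ 1 := by
        have : (1:ℝ)/K ≤ 1 := by rw [div_le_one hK0]; linarith
        linarith
      linarith
    have : 2*w/K ≤ (A - 1/2)/K := by gcongr
    rw [hrdef]
    linarith
  -- w * r^k small
  obtain ⟨y, hydef⟩ : ∃ y : ℝ, y = w * r ^ k := ⟨_, rfl⟩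
  have hy0 : (0:ℝ) ≤ y := by rw [hydef]; exact mul_nonneg hw.le (pow_nonneg hr0.le k)
  have hy23 : y ≤ 2/3 := by
    have h1 : r ≤ Real.exp ((A - 1/2)/K) := by
      have := Real.add_one_le_exp ((A - 1/2)/K); rw [hrdef]; linarith
    have h2 : r ^ k ≤ Real.exp (A - 1/2) := by
      calc r ^ k ≤ Real.exp ((A - 1/2)/K) ^ k := pow_le_pow_left₀ hr0.le h1 k
        _ = Real.exp ((k:ℝ) * ((A - 1/2)/K)) := (Real.exp_nat_mul _ k).symm
        _ = Real.exp (A - 1/2) := by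
            rw [show (k:ℝ) * ((A - 1/2) / K) = A - 1/2 by rw [← hKdef]; field_simp]
    have h3 : Real.exp (A - 1/2) = K * Real.exp (-(1/2:ℝ)) := by
      rw [show A - 1/2 = A + (-(1/2:ℝ)) by ring, Real.exp_add, hAdef, Real.exp_log hK0]
    have h4 : Real.exp (-(1/2:ℝ)) ≤ 2/3 := by
      rw [Real.exp_neg]
      have h5 : (3/2:ℝ) ≤ Real.exp (1/2) := by
        have := Real.add_one_le_exp (1/2:ℝ); linarith
      calc (Real.exp (1/2:ℝ))⁻¹ ≤ ((3:ℝ)/2)⁻¹ := by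
            apply inv_anti₀ (by norm_num) h5
        _ = 2/3 := by norm_num
    have h6 := mul_le_mul hwK (h2.trans (le_of_eq h3)) (pow_nonneg hr0.le k)
      (by positivity : (0:ℝ) ≤ 1/K)
    have h7 : 1/K * (K * Real.exp (-(1/2:ℝ))) = Real.exp (-(1/2:ℝ)) := by field_simp
    rw [hydef]
    linarith
  have hyexp : Real.exp y - 1 < 1 := by
    have hlt : y < Real.log 2 := by
      have := Real.log_two_gt_d9; linarith
    have := Real.exp_lt_exp.2 hlt
    rw [Real.exp_log two_pos] at this
    linarith
  -- G(ρ) = 1 over ℂ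
  have hGρ : (∑' ℓ, Stmt5Aux.f w k (ρ:ℂ) ℓ) = 1 := by
    have hreal := Stmt5Aux.real_tsum_eq_one hw.le hρ0 hint
    calc (∑' ℓ, Stmt5Aux.f w k (ρ:ℂ) ℓ)
        = ∑' ℓ : ℕ, (((-w) ^ ℓ * ρ ^ (ℓ * k + 1) /
            (((ℓ * k + 1 : ℕ) : ℝ) * ((ℓ ! : ℕ) : ℝ)) : ℝ) : ℂ) := by
          refine tsum_congr fun ℓ => ?_
          simp only [Stmt5Aux.f]
          push_cast
          ring
      _ = (((∑' ℓ : ℕ, ((-w) ^ ℓ * ρ ^ (ℓ * k + 1) /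
            (((ℓ * k + 1 : ℕ) : ℝ) * ((ℓ ! : ℕ) : ℝ)))) : ℝ) : ℂ) :=
          (Complex.ofReal_tsum _).symm
      _ = 1 := by rw [hreal]; norm_num
  -- geometric sum factor
  have hρc : ‖((ρ:ℝ):ℂ)‖ ≤ r := by
    rw [Complex.norm_real, Real.norm_eq_abs, abs_of_pos hρ0]
    exact hρr
  set g : ℕ → ℂ := fun ℓ => ((-w : ℂ)) ^ ℓ *
      (∑ j ∈ Finset.range (ℓ * k + 1), z₀ ^ j * ((ρ:ℝ):ℂ) ^ (ℓ * k + 1 - 1 - j)) /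
      (((ℓ * k + 1 : ℕ) : ℂ) * ((ℓ ! : ℕ) : ℂ)) with hgdef
  have hgnorm : ∀ ℓ : ℕ, ‖g ℓ‖ ≤ y ^ ℓ / ((ℓ ! : ℕ) : ℝ) := by
    intro ℓ
    have hsumnorm : ‖∑ j ∈ Finset.range (ℓ * k + 1), z₀ ^ j * ((ρ:ℝ):ℂ) ^ (ℓ * k + 1 - 1 - j)‖
        ≤ ((ℓ * k + 1 : ℕ) : ℝ) * r ^ (ℓ * k) := by
      calc ‖∑ j ∈ Finset.range (ℓ * k + 1), z₀ ^ j * ((ρ:ℝ):ℂ) ^ (ℓ * k + 1 - 1 - j)‖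
          ≤ ∑ j ∈ Finset.range (ℓ * k + 1), ‖z₀ ^ j * ((ρ:ℝ):ℂ) ^ (ℓ * k + 1 - 1 - j)‖ :=
            norm_sum_le _ _
        _ ≤ ∑ _j ∈ Finset.range (ℓ * k + 1), r ^ (ℓ * k) := by
            refine Finset.sum_le_sum fun j hj => ?_
            have hj' : j ≤ ℓ * k := by
              have := Finset.mem_range.1 hj; omega
            rw [show ℓ * k + 1 - 1 - j = ℓ * k - j by omega, norm_mul, norm_pow, norm_pow]
            calc ‖z₀‖ ^ j * ‖((ρ:ℝ):ℂ)‖ ^ (ℓ * k - j) ≤ r ^ j * r ^ (ℓ * k - j) :=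
                  mul_le_mul (pow_le_pow_left₀ (norm_nonneg _) hz₀r j)
                    (pow_le_pow_left₀ (norm_nonneg _) hρc _)
                    (pow_nonneg (norm_nonneg _) _) (pow_nonneg hr0.le _)
              _ = r ^ (ℓ * k) := by rw [← pow_add]; congr 1; omega
        _ = ((ℓ * k + 1 : ℕ) : ℝ) * r ^ (ℓ * k) := by
            rw [Finset.sum_const, Finset.card_range, nsmul_eq_mul]
    have hnormg : ‖g ℓ‖ = w ^ ℓ *
        ‖∑ j ∈ Finset.range (ℓ * k + 1), z₀ ^ j * ((ρ:ℝ):ℂ) ^ (ℓ * k + 1 - 1 - j)‖ /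
        (((ℓ * k + 1 : ℕ) : ℝ) * ((ℓ ! : ℕ) : ℝ)) := by
      simp only [hgdef]
      simp only [norm_div, norm_mul, norm_pow, norm_neg,
        Complex.norm_real, Real.norm_eq_abs, abs_of_nonneg hw.le, Complex.norm_natCast]
    have hNpos : (0:ℝ) < ((ℓ * k + 1 : ℕ) : ℝ) := by positivity
    have hfacpos : (0:ℝ) < ((ℓ ! : ℕ) : ℝ) := by exact_mod_cast Nat.factorial_pos ℓ
    rw [hnormg]
    calc w ^ ℓ * ‖∑ j ∈ Finset.range (ℓ * k + 1), z₀ ^ j * ((ρ:ℝ):ℂ) ^ (ℓ * k + 1 - 1 - j)‖ /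
          (((ℓ * k + 1 : ℕ) : ℝ) * ((ℓ ! : ℕ) : ℝ))
        ≤ w ^ ℓ * (((ℓ * k + 1 : ℕ) : ℝ) * r ^ (ℓ * k)) /
          (((ℓ * k + 1 : ℕ) : ℝ) * ((ℓ ! : ℕ) : ℝ)) := by gcongr <;> positivity
      _ = y ^ ℓ / ((ℓ ! : ℕ) : ℝ) := by
          rw [hydef, mul_pow, show r ^ (ℓ * k) = (r ^ k) ^ ℓ by rw [← pow_mul, mul_comm]]
          field_simp
  have hg0 : g 0 = 1 := by
    simp [hgdef]
  have hgsum : Summable g :=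
    Summable.of_norm_bounded (Real.summable_pow_div_factorial y) hgnorm
  have hfac : ∀ ℓ : ℕ, g ℓ * (z₀ - (ρ:ℂ)) = Stmt5Aux.f w k z₀ ℓ - Stmt5Aux.f w k (ρ:ℂ) ℓ := by
    intro ℓ
    have hgeo := geom_sum₂_mul z₀ ((ρ:ℝ):ℂ) (ℓ * k + 1)
    calc g ℓ * (z₀ - (ρ:ℂ))
        = ((-w : ℂ)) ^ ℓ *
          ((∑ j ∈ Finset.range (ℓ * k + 1), z₀ ^ j * ((ρ:ℝ):ℂ) ^ (ℓ * k + 1 - 1 - j)) *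
            (z₀ - (ρ:ℂ))) / (((ℓ * k + 1 : ℕ) : ℂ) * ((ℓ ! : ℕ) : ℂ)) := by
          simp only [hgdef]; ring
      _ = ((-w : ℂ)) ^ ℓ * (z₀ ^ (ℓ * k + 1) - ((ρ:ℝ):ℂ) ^ (ℓ * k + 1)) /
          (((ℓ * k + 1 : ℕ) : ℂ) * ((ℓ ! : ℕ) : ℂ)) := by rw [hgeo]
      _ = Stmt5Aux.f w k z₀ ℓ - Stmt5Aux.f w k (ρ:ℂ) ℓ := by
          simp only [Stmt5Aux.f]; ring
  have hTne : (∑' ℓ, g ℓ) ≠ 0 := by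
    have hb : ∀ ℓ : ℕ, ‖g (ℓ+1)‖ ≤ 1 * (y ^ (ℓ+1) / (((ℓ+1)! : ℕ) : ℝ)) := by
      intro ℓ; rw [one_mul]; exact hgnorm (ℓ+1)
    have htail := Stmt5Aux.tsum_sub_head_le hgsum hb
    rw [hg0, one_mul] at htail
    intro h0
    rw [h0] at htail
    simp only [zero_sub, norm_neg, norm_one] at htail
    linarith
  have hmain : (∑' ℓ, g ℓ) * (z₀ - (ρ:ℂ)) = 0 := by
    calc (∑' ℓ, g ℓ) * (z₀ - (ρ:ℂ)) = ∑' ℓ, g ℓ * (z₀ - (ρ:ℂ)) := tsum_mul_right.symm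
      _ = ∑' ℓ, (Stmt5Aux.f w k z₀ ℓ - Stmt5Aux.f w k (ρ:ℂ) ℓ) := tsum_congr hfac
      _ = (∑' ℓ, Stmt5Aux.f w k z₀ ℓ) - (∑' ℓ, Stmt5Aux.f w k (ρ:ℂ) ℓ) :=
          Summable.tsum_sub (Stmt5Aux.summable_f hw.le k z₀) (Stmt5Aux.summable_f hw.le k (ρ:ℂ))
      _ = 0 := by rw [hsumz, hGρ]; ring
  rcases mul_eq_zero.1 hmain with h | h
  · exact absurd h hTne
  · exact sub_eq_zero.1 h
end

section
/- Let t be a plane binary tree of size k ≥ 1 and let w(t) = 1/∏_{s fringe subtree of t} |s| denote its weight. Then w(t) ≤ 1/2^{k-2}; equivalently, the product of the sizes of all fringe subtrees of t is at least 2^{k-2}. -/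
/-- Plane binary trees: a leaf (empty tree) or an internal node with an ordered pair of
subtrees. -/
inductive PBTree : Type
  | leaf : PBTree
  | node : PBTree → PBTree → PBTree

namespace PBTree

/-- The size of a plane binary tree is its number of internal nodes. -/
def size : PBTree → ℕ
  | leaf => 0
  | node l r => l.size + r.size + 1

/-- The product of the sizes of all fringe subtrees of `t` (subtrees rooted at internal nodes
of `t`, including `t` itself). -/
def subtreeProd : PBTree → ℕ
  | leaf => 1
  | node l r => (node l r).size * (l.subtreeProd * r.subtreeProd)

end PBTree

lemma PBTree.prod_pos (t : PBTree) : 0 < t.subtreeProd := by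
  induction t with
  | leaf => simp [PBTree.subtreeProd]
  | node l r ihl ihr =>
    simp only [PBTree.subtreeProd, PBTree.size]
    positivity

lemma PBTree.key : ∀ t : PBTree, 1 ≤ t.size → 3 * 2 ^ t.size ≤ 8 * t.subtreeProd := by
  intro t
  induction t with
  | leaf => simp [PBTree.size]
  | node l r ihl ihr =>
    intro _
    have hl := l.prod_pos
    have hr := r.prod_pos
    simp only [PBTree.subtreeProd, PBTree.size] at *
    generalize hga : l.size = a at *
    generalize hgb : r.size = b at *
    generalize hgP : l.subtreeProd = P at *
    generalize hgQ : r.subtreeProd = Q at *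
    rcases Nat.eq_zero_or_pos a with h0 | hapos
    · rcases Nat.eq_zero_or_pos b with h00 | hbpos
      · rw [h0] at *;  subst h00; simpa using Nat.mul_le_mul (by norm_num : (6:ℕ) ≤ 8) (Nat.one_le_iff_ne_zero.mpr (by positivity))
      · have ihb := ihr hbpos
        rw [h0] at * 
        calc 3 * 2 ^ (0 + b + 1) = 2 * (3 * 2 ^ b) := by ring
        _ ≤ 2 * (8 * Q) := by exact Nat.mul_le_mul_left _ ihb
        _ ≤ 8 * ((0 + b + 1) * (P * Q)) := by
            have h2 : 2 * Q ≤ (0 + b + 1) * (P * Q) :=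
              Nat.mul_le_mul (by omega) (Nat.le_mul_of_pos_left _ hl)
            linarith
    · rcases Nat.eq_zero_or_pos b with h00 | hbpos
      · have iha := ihl hapos
        rw [h00] at *
        calc 3 * 2 ^ (a + 0 + 1) = 2 * (3 * 2 ^ a) := by ring
        _ ≤ 2 * (8 * P) := by exact Nat.mul_le_mul_left _ iha
        _ ≤ 8 * ((a + 0 + 1) * (P * Q)) := by
            have h2 : 2 * P ≤ (a + 0 + 1) * (P * Q) :=
              Nat.mul_le_mul (by omega) (Nat.le_mul_of_pos_right _ hr)
            linarith
      · have iha := ihl hapos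
        have ihb := ihr hbpos
        rcases le_or_gt 5 (a + b) with hbig | hsmall
        · -- 9·2^(a+b) ≤ 64 PQ ; need 6·2^(a+b) ≤ 8(a+b+1)PQ with a+b+1 ≥ 6
          have hmul : (3 * 2 ^ a) * (3 * 2 ^ b) ≤ (8 * P) * (8 * Q) :=
            Nat.mul_le_mul iha ihb
          have h9 : 9 * 2 ^ (a + b) ≤ 64 * (P * Q) := by
            calc 9 * 2 ^ (a + b) = (3 * 2 ^ a) * (3 * 2 ^ b) := by rw [pow_add]; ring
            _ ≤ (8 * P) * (8 * Q) := hmul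
            _ = 64 * (P * Q) := by ring
          have goal9 : 9 * (3 * 2 ^ (a + b + 1)) ≤ 9 * (8 * ((a + b + 1) * (P * Q))) := by
            calc 9 * (3 * 2 ^ (a + b + 1)) = 6 * (9 * 2 ^ (a + b)) := by rw [pow_succ]; ring
            _ ≤ 6 * (64 * (P * Q)) := Nat.mul_le_mul_left _ h9
            _ = 384 * (P * Q) := by ring
            _ ≤ 9 * (8 * ((a + b + 1) * (P * Q))) := by
                have h6 : 6 * (P * Q) ≤ (a + b + 1) * (P * Q) :=
                  Nat.mul_le_mul_right _ (by omega)
                nlinarith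
          exact Nat.le_of_mul_le_mul_left goal9 (by norm_num)
        · -- a, b ≥ 1, a + b ≤ 4
          have ha4 : a ≤ 3 := by omega
          have hb4 : b ≤ 3 := by omega
          have hPQ : 9 * 2 ^ (a + b) ≤ 64 * (P * Q) := by
            calc 9 * 2 ^ (a + b) = (3 * 2 ^ a) * (3 * 2 ^ b) := by rw [pow_add]; ring
            _ ≤ (8 * P) * (8 * Q) := Nat.mul_le_mul iha ihb
            _ = 64 * (P * Q) := by ring
          interval_cases a <;> interval_cases b <;>
            · norm_num at hPQ ⊢
              omega

/-- For a plane binary tree `t` of size `k ≥ 1`, the weight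
`w(t) = 1/∏_{s fringe subtree of t} |s|` satisfies `w(t) ≤ 1/2^(k-2)`; equivalently the
product of the sizes of all fringe subtrees of `t` is at least `2^(k-2)`. -/
theorem stmt7 (t : PBTree) (k : ℕ) (hk : 1 ≤ k) (ht : t.size = k) :
    (1 : ℝ) / (t.subtreeProd : ℝ) ≤ 1 / (2 : ℝ) ^ ((k : ℤ) - 2) ∧
      (2 : ℝ) ^ ((k : ℤ) - 2) ≤ (t.subtreeProd : ℝ) := by
  have hkey : 3 * 2 ^ k ≤ 8 * t.subtreeProd := ht ▸ t.key (ht ▸ hk)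
  have hpos : (0 : ℝ) < (t.subtreeProd : ℝ) := by exact_mod_cast t.prod_pos
  have h2 : (2 : ℝ) ^ k ≤ 4 * (t.subtreeProd : ℝ) := by
    have : (3 : ℝ) * 2 ^ k ≤ 8 * (t.subtreeProd : ℝ) := by exact_mod_cast hkey
    nlinarith
  have hz : (2 : ℝ) ^ ((k : ℤ) - 2) = (2 : ℝ) ^ k / 4 := by
    rw [zpow_sub₀ (by norm_num : (2:ℝ) ≠ 0)]
    norm_num [zpow_natCast]
  have hmain : (2 : ℝ) ^ ((k : ℤ) - 2) ≤ (t.subtreeProd : ℝ) := by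
    rw [hz]; linarith
  refine ⟨?_, hmain⟩
  exact one_div_le_one_div_of_le (by rw [hz]; positivity) hmain
end

section
/- For each integer k ≥ 2 let w_k be a real number with 0 < w_k ≤ 1/2^{k-2}, let u_k = u_{k,w_k} be the solution of u'' − 2u' + (1 − w_k k z^{k-1})u = 0 with u(0) = −1, u'(0) = 0, and suppose ρ_k > 1 is a real number with u_k(ρ_k) = 0 and u_k(x) ≠ 0 for all x ∈ (0, ρ_k). Then k²·(ρ_k − 1)/(2 w_k) → 1 as k → ∞; i.e., ρ̃ = 1 + ε ~ 1 + 2w_k/k². -/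
open scoped BigOperators

/-- The falling factorial `(x)_m = x (x-1) ⋯ (x-m+1)` of a real number. -/
noncomputable def fallFact (x : ℝ) (m : ℕ) : ℝ := ∏ j ∈ Finset.range m, (x - j)

/-- The function `u_{k,w}`, the solution of `u'' - 2u' + (1 - w k z^(k-1)) u = 0` with
`u(0) = -1`, `u'(0) = 0`, given by its Bessel-type series. -/
noncomputable def ukw (k : ℕ) (w : ℝ) (z : ℝ) : ℝ :=
  z * Real.exp z * ∑' m : ℕ, (w * k / ((k : ℝ) + 1) ^ 2) ^ m * z ^ ((k + 1) * m) /
      ((Nat.factorial m : ℝ) * fallFact ((m : ℝ) + 1 / ((k : ℝ) + 1)) m)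
    - Real.exp z * ∑' m : ℕ, (w * k / ((k : ℝ) + 1) ^ 2) ^ m * z ^ ((k + 1) * m) /
      ((Nat.factorial m : ℝ) * fallFact ((m : ℝ) - 1 / ((k : ℝ) + 1)) m)





lemma fallFact_zero (x : ℝ) : fallFact x 0 = 1 := by simp [fallFact]

lemma fallFact_one (x : ℝ) : fallFact x 1 = x := by simp [fallFact]

lemma one_le_fallFact_a (α : ℝ) (hα : 0 ≤ α) (m : ℕ) : 1 ≤ fallFact ((m : ℝ) + α) m := by
  have h : (1:ℝ) = ∏ _j ∈ Finset.range m, (1:ℝ) := by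
    rw [Finset.prod_const]; simp
  rw [fallFact, h]
  apply Finset.prod_le_prod
  · intro i _; norm_num
  intro j hj
  rw [Finset.mem_range] at hj
  have : (j : ℝ) + 1 ≤ (m : ℝ) := by exact_mod_cast Nat.succ_le_of_lt hj
  linarith

lemma pow_le_fallFact_b (α : ℝ) (hα0 : 0 ≤ α) (hα1 : α ≤ 1) (m : ℕ) :
    (1 - α) ^ m ≤ fallFact ((m : ℝ) - α) m := by
  have h : (1 - α) ^ m = ∏ _j ∈ Finset.range m, (1 - α) := by
    rw [Finset.prod_const, Finset.card_range]
  rw [h, fallFact]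
  apply Finset.prod_le_prod
  · intro i _; linarith
  · intro j hj
    rw [Finset.mem_range] at hj
    have : (j : ℝ) + 1 ≤ (m : ℝ) := by exact_mod_cast Nat.succ_le_of_lt hj
    linarith

lemma fallFact_a_pos (α : ℝ) (hα : 0 ≤ α) (m : ℕ) : 0 < fallFact ((m : ℝ) + α) m :=
  lt_of_lt_of_le one_pos (one_le_fallFact_a α hα m)

lemma fallFact_b_pos (α : ℝ) (hα0 : 0 ≤ α) (hα1 : α < 1) (m : ℕ) :
    0 < fallFact ((m : ℝ) - α) m :=
  lt_of_lt_of_le (pow_pos (by linarith) m) (pow_le_fallFact_b α hα0 (le_of_lt hα1) m)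

noncomputable def aterm (k : ℕ) (w x : ℝ) (m : ℕ) : ℝ :=
  (w * k / ((k : ℝ) + 1) ^ 2) ^ m * x ^ ((k + 1) * m) /
      ((Nat.factorial m : ℝ) * fallFact ((m : ℝ) + 1 / ((k : ℝ) + 1)) m)

noncomputable def bterm (k : ℕ) (w x : ℝ) (m : ℕ) : ℝ :=
  (w * k / ((k : ℝ) + 1) ^ 2) ^ m * x ^ ((k + 1) * m) /
      ((Nat.factorial m : ℝ) * fallFact ((m : ℝ) - 1 / ((k : ℝ) + 1)) m)

lemma ukw_eq (k : ℕ) (w z : ℝ) :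
    ukw k w z = z * Real.exp z * ∑' m, aterm k w z m - Real.exp z * ∑' m, bterm k w z m := rfl

section Bounds

variable {k : ℕ} {w x : ℝ}

lemma alpha_pos (k : ℕ) : (0:ℝ) < 1 / ((k : ℝ) + 1) := by positivity

lemma alpha_lt_one (hk : 1 ≤ k) : 1 / ((k : ℝ) + 1) < 1 := by
  have : (1:ℝ) ≤ (k:ℝ) := by exact_mod_cast hk
  rw [div_lt_one (by linarith)]; linarith

lemma c_nonneg (hw : 0 ≤ w) : 0 ≤ w * k / ((k : ℝ) + 1) ^ 2 := by positivity

lemma aterm_nonneg (hw : 0 ≤ w) (hx : 0 ≤ x) (m : ℕ) : 0 ≤ aterm k w x m := by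
  have := fallFact_a_pos (1 / ((k : ℝ) + 1)) (le_of_lt (alpha_pos k)) m
  apply div_nonneg _ (by positivity)
  exact mul_nonneg (pow_nonneg (c_nonneg hw) m) (pow_nonneg hx _)

lemma bterm_nonneg (hk : 1 ≤ k) (hw : 0 ≤ w) (hx : 0 ≤ x) (m : ℕ) : 0 ≤ bterm k w x m := by
  have := fallFact_b_pos (1 / ((k : ℝ) + 1)) (le_of_lt (alpha_pos k)) (alpha_lt_one hk) m
  apply div_nonneg _ (by positivity)
  exact mul_nonneg (pow_nonneg (c_nonneg hw) m) (pow_nonneg hx _)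

/-- Key pointwise bound: each term is at most `q^m / m!` where
`q = c x^(k+1) / (1 - α)`. -/
lemma aterm_le (hk : 1 ≤ k) (hw : 0 ≤ w) (hx : 0 ≤ x) (m : ℕ) :
    aterm k w x m ≤ (w * k / ((k : ℝ) + 1) ^ 2 * x ^ (k + 1) / (1 - 1 / ((k : ℝ) + 1))) ^ m
      / (Nat.factorial m : ℝ) := by
  set α := 1 / ((k : ℝ) + 1) with hα
  have hα0 : 0 < α := alpha_pos k
  have hα1 : α < 1 := alpha_lt_one hk
  set c := w * k / ((k : ℝ) + 1) ^ 2 with hc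
  have hc0 : 0 ≤ c := c_nonneg hw
  have hN : 0 ≤ c ^ m * x ^ ((k + 1) * m) :=
    mul_nonneg (pow_nonneg hc0 m) (pow_nonneg hx _)
  have hF : (1 - α) ^ m ≤ fallFact ((m : ℝ) + α) m := by
    calc (1 - α) ^ m ≤ 1 ^ m := pow_le_pow_left₀ (by linarith) (by linarith) m
    _ = 1 := one_pow m
    _ ≤ _ := one_le_fallFact_a α (le_of_lt hα0) m
  have hfac : (0:ℝ) < (Nat.factorial m : ℝ) := by exact_mod_cast Nat.factorial_pos m
  have hpow : (0:ℝ) < (1 - α) ^ m := pow_pos (by linarith) m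
  have step1 : aterm k w x m ≤ c ^ m * x ^ ((k + 1) * m) / ((Nat.factorial m : ℝ) * (1 - α) ^ m) := by
    rw [aterm]
    apply div_le_div_of_nonneg_left hN (by positivity)
    exact mul_le_mul_of_nonneg_left hF (le_of_lt hfac)
  refine step1.trans (le_of_eq ?_)
  have hpe : (c * x ^ (k + 1) / (1 - α)) ^ m = c ^ m * x ^ ((k + 1) * m) / (1 - α) ^ m := by
    rw [div_pow, mul_pow, ← pow_mul]
  rw [hpe, div_div, mul_comm ((1 - α) ^ m)]

lemma bterm_le (hk : 1 ≤ k) (hw : 0 ≤ w) (hx : 0 ≤ x) (m : ℕ) :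
    bterm k w x m ≤ (w * k / ((k : ℝ) + 1) ^ 2 * x ^ (k + 1) / (1 - 1 / ((k : ℝ) + 1))) ^ m
      / (Nat.factorial m : ℝ) := by
  set α := 1 / ((k : ℝ) + 1) with hα
  have hα0 : 0 < α := alpha_pos k
  have hα1 : α < 1 := alpha_lt_one hk
  set c := w * k / ((k : ℝ) + 1) ^ 2 with hc
  have hc0 : 0 ≤ c := c_nonneg hw
  have hN : 0 ≤ c ^ m * x ^ ((k + 1) * m) :=
    mul_nonneg (pow_nonneg hc0 m) (pow_nonneg hx _)
  have hF : (1 - α) ^ m ≤ fallFact ((m : ℝ) - α) m :=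
    pow_le_fallFact_b α (le_of_lt hα0) (le_of_lt hα1) m
  have hfac : (0:ℝ) < (Nat.factorial m : ℝ) := by exact_mod_cast Nat.factorial_pos m
  have hpow : (0:ℝ) < (1 - α) ^ m := pow_pos (by linarith) m
  have step1 : bterm k w x m ≤ c ^ m * x ^ ((k + 1) * m) / ((Nat.factorial m : ℝ) * (1 - α) ^ m) := by
    rw [bterm]
    apply div_le_div_of_nonneg_left hN (by positivity)
    exact mul_le_mul_of_nonneg_left hF (le_of_lt hfac)
  refine step1.trans (le_of_eq ?_)
  have hpe : (c * x ^ (k + 1) / (1 - α)) ^ m = c ^ m * x ^ ((k + 1) * m) / (1 - α) ^ m := by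
    rw [div_pow, mul_pow, ← pow_mul]
  rw [hpe, div_div, mul_comm ((1 - α) ^ m)]

end Bounds

set_option maxHeartbeats 400000 in
lemma series_decomp {f : ℕ → ℝ} {q : ℝ} (hq0 : 0 ≤ q) (hq : q ≤ 1/2)
    (hnn : ∀ m, 0 ≤ f m) (hle : ∀ m, f m ≤ q ^ m / (Nat.factorial m : ℝ)) :
    Summable f ∧ (∑' m, f m) = f 0 + f 1 + ∑' m, f (m + 2) ∧
      0 ≤ (∑' m, f (m + 2)) ∧ (∑' m, f (m + 2)) ≤ 2 * q ^ 2 := by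
  have hq1 : q < 1 := by linarith
  have hs : Summable f :=
    Summable.of_nonneg_of_le hnn hle (Real.summable_pow_div_factorial q)
  have hs1 : Summable (fun m => f (m + 1)) := (summable_nat_add_iff 1).mpr hs
  have hs2 : Summable (fun m => f (m + 2)) := (summable_nat_add_iff 2).mpr hs
  refine ⟨hs, ?_, tsum_nonneg (fun m => hnn _), ?_⟩
  · rw [Summable.tsum_eq_zero_add hs, Summable.tsum_eq_zero_add hs1, ← add_assoc]
  · have h1 : ∀ m, f (m + 2) ≤ q ^ 2 * q ^ m := by
      intro m
      refine (hle (m + 2)).trans ?_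
      have hfac1 : (1:ℝ) ≤ ((m + 2).factorial : ℝ) := by
        exact_mod_cast Nat.one_le_iff_ne_zero.mpr (Nat.factorial_ne_zero _)
      have := div_le_self (pow_nonneg hq0 (m + 2)) hfac1
      calc q ^ (m + 2) / ((m + 2).factorial : ℝ) ≤ q ^ (m + 2) := this
      _ = q ^ 2 * q ^ m := by ring
    have hgs : Summable (fun m : ℕ => q ^ 2 * q ^ m) :=
      (summable_geometric_of_lt_one hq0 hq1).mul_left _
    have h2 : (∑' m, f (m + 2)) ≤ ∑' m : ℕ, q ^ 2 * q ^ m := Summable.tsum_le_tsum h1 hs2 hgs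
    rw [tsum_mul_left, tsum_geometric_of_lt_one hq0 hq1] at h2
    have hinv : (1 - q)⁻¹ ≤ 2 := by
      have h : (0:ℝ) < 1 - q := by linarith
      rw [inv_le_iff_one_le_mul₀ h]; linarith
    have : q ^ 2 * (1 - q)⁻¹ ≤ q ^ 2 * 2 :=
      mul_le_mul_of_nonneg_left hinv (sq_nonneg q)
    linarith

lemma aterm_zero (k : ℕ) (w x : ℝ) : aterm k w x 0 = 1 := by
  simp [aterm, fallFact]

lemma bterm_zero (k : ℕ) (w x : ℝ) : bterm k w x 0 = 1 := by
  simp [bterm, fallFact]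

lemma aterm_one (k : ℕ) (w x : ℝ) :
    aterm k w x 1 = w * k / ((k : ℝ) + 1) ^ 2 * x ^ (k + 1) / (1 + 1 / ((k : ℝ) + 1)) := by
  simp [aterm, fallFact_one]

lemma bterm_one (k : ℕ) (w x : ℝ) :
    bterm k w x 1 = w * k / ((k : ℝ) + 1) ^ 2 * x ^ (k + 1) / (1 - 1 / ((k : ℝ) + 1)) := by
  simp [bterm, fallFact_one]

lemma aterm_decomp {k : ℕ} {w x : ℝ} (hk : 1 ≤ k) (hw : 0 ≤ w) (hx : 0 ≤ x)
    (hq : w * k / ((k : ℝ) + 1) ^ 2 * x ^ (k + 1) / (1 - 1 / ((k : ℝ) + 1)) ≤ 1 / 2) :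
    Summable (aterm k w x) ∧
      (∑' m, aterm k w x m) = 1 + w * k / ((k : ℝ) + 1) ^ 2 * x ^ (k + 1) / (1 + 1 / ((k : ℝ) + 1))
        + ∑' m, aterm k w x (m + 2) ∧
      0 ≤ (∑' m, aterm k w x (m + 2)) ∧
      (∑' m, aterm k w x (m + 2)) ≤
        2 * (w * k / ((k : ℝ) + 1) ^ 2 * x ^ (k + 1) / (1 - 1 / ((k : ℝ) + 1))) ^ 2 := by
  have hq0 : 0 ≤ w * k / ((k : ℝ) + 1) ^ 2 * x ^ (k + 1) / (1 - 1 / ((k : ℝ) + 1)) := by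
    have h1 : 1 / ((k : ℝ) + 1) < 1 := alpha_lt_one hk
    have : 0 ≤ w * k / ((k : ℝ) + 1) ^ 2 * x ^ (k + 1) :=
      mul_nonneg (c_nonneg hw) (pow_nonneg hx _)
    exact div_nonneg this (by linarith)
  obtain ⟨hs, hdec, hnn, hle⟩ := series_decomp hq0 hq (aterm_nonneg hw hx) (aterm_le hk hw hx)
  refine ⟨hs, ?_, hnn, hle⟩
  rw [hdec, aterm_zero, aterm_one]

lemma bterm_decomp {k : ℕ} {w x : ℝ} (hk : 1 ≤ k) (hw : 0 ≤ w) (hx : 0 ≤ x)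
    (hq : w * k / ((k : ℝ) + 1) ^ 2 * x ^ (k + 1) / (1 - 1 / ((k : ℝ) + 1)) ≤ 1 / 2) :
    Summable (bterm k w x) ∧
      (∑' m, bterm k w x m) = 1 + w * k / ((k : ℝ) + 1) ^ 2 * x ^ (k + 1) / (1 - 1 / ((k : ℝ) + 1))
        + ∑' m, bterm k w x (m + 2) ∧
      0 ≤ (∑' m, bterm k w x (m + 2)) ∧
      (∑' m, bterm k w x (m + 2)) ≤
        2 * (w * k / ((k : ℝ) + 1) ^ 2 * x ^ (k + 1) / (1 - 1 / ((k : ℝ) + 1))) ^ 2 := by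
  have hq0 : 0 ≤ w * k / ((k : ℝ) + 1) ^ 2 * x ^ (k + 1) / (1 - 1 / ((k : ℝ) + 1)) := by
    have h1 : 1 / ((k : ℝ) + 1) < 1 := alpha_lt_one hk
    have : 0 ≤ w * k / ((k : ℝ) + 1) ^ 2 * x ^ (k + 1) :=
      mul_nonneg (c_nonneg hw) (pow_nonneg hx _)
    exact div_nonneg this (by linarith)
  obtain ⟨hs, hdec, hnn, hle⟩ := series_decomp hq0 hq (bterm_nonneg hk hw hx) (bterm_le hk hw hx)
  refine ⟨hs, ?_, hnn, hle⟩
  rw [hdec, bterm_zero, bterm_one]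

set_option maxHeartbeats 1000000 in
lemma g_bounds {k : ℕ} {w x : ℝ} (hk : 1 ≤ k) (hw : 0 ≤ w) (hx1 : 1 ≤ x) (hx2 : x ≤ 3/2)
    (hq : w * k / ((k : ℝ) + 1) ^ 2 * x ^ (k + 1) / (1 - 1 / ((k : ℝ) + 1)) ≤ 1 / 2) :
    (x - 1) - 2 * w * x ^ (k + 1) / (((k : ℝ) + 1) * ((k : ℝ) + 2))
        - 2 * (w * k / ((k : ℝ) + 1) ^ 2 * x ^ (k + 1) / (1 - 1 / ((k : ℝ) + 1))) ^ 2
      ≤ x * (∑' m, aterm k w x m) - ∑' m, bterm k w x m ∧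
    x * (∑' m, aterm k w x m) - ∑' m, bterm k w x m
      ≤ (x - 1) + (x - 1) * (w * x ^ (k + 1) / ((k : ℝ) + 2))
        - 2 * w * x ^ (k + 1) / (((k : ℝ) + 1) * ((k : ℝ) + 2))
        + 3 * (w * k / ((k : ℝ) + 1) ^ 2 * x ^ (k + 1) / (1 - 1 / ((k : ℝ) + 1))) ^ 2 := by
  have hx0 : (0:ℝ) ≤ x := by linarith
  have hkR : (1:ℝ) ≤ (k:ℝ) := by exact_mod_cast hk
  obtain ⟨hsa, hA, hRa0, hRa2⟩ := aterm_decomp hk hw hx0 hq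
  obtain ⟨hsb, hB, hRb0, hRb2⟩ := bterm_decomp hk hw hx0 hq
  set K := (k:ℝ) with hKdef
  set X := x ^ (k + 1) with hXdef
  set c := w * K / (K + 1) ^ 2 with hcdef
  set Ra := ∑' m, aterm k w x (m + 2) with hRadef
  set Rb := ∑' m, bterm k w x (m + 2) with hRbdef
  have hX0 : 0 ≤ X := pow_nonneg hx0 _
  have hc0 : 0 ≤ c := c_nonneg hw
  have hK1 : (0:ℝ) < K + 1 := by linarith
  have hK2 : (0:ℝ) < K + 2 := by linarith
  have hKne : K ≠ 0 := by linarith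
  have h1a : (1:ℝ) + 1 / (K + 1) ≠ 0 := by positivity
  have h1bpos : (0:ℝ) < 1 - 1 / (K + 1) := by
    have := alpha_lt_one hk
    rw [← hKdef] at this; linarith
  have h1b : (1:ℝ) - 1 / (K + 1) ≠ 0 := ne_of_gt h1bpos
  set q := c * X / (1 - 1 / (K + 1)) with hqdef
  set ta := c * X / (1 + 1 / (K + 1)) with htadef
  have hta0 : 0 ≤ ta := by
    apply div_nonneg (mul_nonneg hc0 hX0); positivity
  have id0 : ta - q = -(2 * w * X / ((K + 1) * (K + 2))) := by
    rw [htadef, hqdef, hcdef]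
    field_simp
    ring
    field_simp
    ring
  have key : x * ta - q = (x - 1) * (w * X / (K + 2)) - w * (x + 1) * X / ((K + 1) * (K + 2)) := by
    rw [htadef, hqdef, hcdef]
    field_simp
    ring
    field_simp
    ring
  have hexp : x * (∑' m, aterm k w x m) - ∑' m, bterm k w x m
      = (x - 1) + (x * ta - q) + (x * Ra - Rb) := by
    rw [hA, hB]; ring
  have hmono : ta ≤ x * ta := le_mul_of_one_le_left hta0 hx1
  have hxRa0 : 0 ≤ x * Ra := mul_nonneg hx0 hRa0
  have hxRa3 : x * Ra ≤ 3 * q ^ 2 := by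
    have h1 : x * Ra ≤ (3/2) * Ra := mul_le_mul_of_nonneg_right hx2 hRa0
    nlinarith
  have h7 : 2 * w * X / ((K + 1) * (K + 2)) ≤ w * (x + 1) * X / ((K + 1) * (K + 2)) := by
    have hD : (0:ℝ) ≤ (K + 1) * (K + 2) := by positivity
    have hnum : 2 * w * X ≤ w * (x + 1) * X := by nlinarith [mul_nonneg hw hX0]
    exact div_le_div_of_nonneg_right hnum hD
  constructor
  · linarith [id0, hmono, hxRa0, hRb2, hexp]
  · linarith [key, h7, hxRa3, hRb0, hexp]

lemma ukw_zero_eval (k : ℕ) (w : ℝ) : ukw k w 0 = -1 := by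
  rw [ukw_eq]
  have hb : (∑' m, bterm k w 0 m) = 1 := by
    rw [tsum_eq_single 0 ?_]
    · exact bterm_zero k w 0
    · intro m hm
      have : (k + 1) * m ≠ 0 := by positivity
      simp [bterm, zero_pow this]
  rw [hb]
  simp

lemma tsum_aterm_continuousOn {k : ℕ} {w : ℝ} (hk : 1 ≤ k) (hw : 0 ≤ w) :
    ContinuousOn (fun x => ∑' m, aterm k w x m) (Set.Icc (0:ℝ) 2) := by
  set Q := w * k / ((k : ℝ) + 1) ^ 2 * 2 ^ (k + 1) / (1 - 1 / ((k : ℝ) + 1)) with hQ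
  have h1bpos : (0:ℝ) < 1 - 1 / ((k:ℝ) + 1) := by have := alpha_lt_one hk; linarith
  apply continuousOn_tsum (u := fun m => Q ^ m / (Nat.factorial m : ℝ))
  · intro m
    apply Continuous.continuousOn
    unfold aterm
    fun_prop
  · exact Real.summable_pow_div_factorial Q
  · intro m x hx
    obtain ⟨hx0, hx2⟩ := hx
    have hnn := aterm_nonneg (k := k) hw hx0 m
    rw [Real.norm_eq_abs, abs_of_nonneg hnn]
    refine (aterm_le hk hw hx0 m).trans ?_
    apply div_le_div_of_nonneg_right _ (by positivity)
    apply pow_le_pow_left₀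
    · have : 0 ≤ w * k / ((k : ℝ) + 1) ^ 2 * x ^ (k + 1) :=
        mul_nonneg (c_nonneg hw) (pow_nonneg hx0 _)
      exact div_nonneg this h1bpos.le
    · apply div_le_div_of_nonneg_right _ h1bpos.le
      exact mul_le_mul_of_nonneg_left (pow_le_pow_left₀ hx0 hx2 _) (c_nonneg hw)

lemma tsum_bterm_continuousOn {k : ℕ} {w : ℝ} (hk : 1 ≤ k) (hw : 0 ≤ w) :
    ContinuousOn (fun x => ∑' m, bterm k w x m) (Set.Icc (0:ℝ) 2) := by
  set Q := w * k / ((k : ℝ) + 1) ^ 2 * 2 ^ (k + 1) / (1 - 1 / ((k : ℝ) + 1)) with hQ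
  have h1bpos : (0:ℝ) < 1 - 1 / ((k:ℝ) + 1) := by have := alpha_lt_one hk; linarith
  apply continuousOn_tsum (u := fun m => Q ^ m / (Nat.factorial m : ℝ))
  · intro m
    apply Continuous.continuousOn
    unfold bterm
    fun_prop
  · exact Real.summable_pow_div_factorial Q
  · intro m x hx
    obtain ⟨hx0, hx2⟩ := hx
    have hnn := bterm_nonneg (k := k) hk hw hx0 m
    rw [Real.norm_eq_abs, abs_of_nonneg hnn]
    refine (bterm_le hk hw hx0 m).trans ?_
    apply div_le_div_of_nonneg_right _ (by positivity)
    apply pow_le_pow_left₀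
    · have : 0 ≤ w * k / ((k : ℝ) + 1) ^ 2 * x ^ (k + 1) :=
        mul_nonneg (c_nonneg hw) (pow_nonneg hx0 _)
      exact div_nonneg this h1bpos.le
    · apply div_le_div_of_nonneg_right _ h1bpos.le
      exact mul_le_mul_of_nonneg_left (pow_le_pow_left₀ hx0 hx2 _) (c_nonneg hw)

lemma ukw_continuousOn {k : ℕ} {w : ℝ} (hk : 1 ≤ k) (hw : 0 ≤ w) :
    ContinuousOn (ukw k w) (Set.Icc (0:ℝ) 2) := by
  have ha := tsum_aterm_continuousOn hk hw
  have hb := tsum_bterm_continuousOn hk hw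
  have : ContinuousOn (fun z => z * Real.exp z * (∑' m, aterm k w z m)
      - Real.exp z * (∑' m, bterm k w z m)) (Set.Icc (0:ℝ) 2) := by
    apply ContinuousOn.sub
    · exact (continuousOn_id.mul (Real.continuous_exp.continuousOn)).mul ha
    · exact Real.continuous_exp.continuousOn.mul hb
  exact this

lemma exp_two_lt_eight : Real.exp 2 < 8 := by
  have h1 := Real.exp_one_lt_d9
  have h2 : Real.exp 2 = Real.exp 1 * Real.exp 1 := by
    rw [← Real.exp_add]; norm_num
  nlinarith [Real.exp_pos 1]

lemma exp_le_one_add_three {s : ℝ} (h0 : 0 ≤ s) (h1 : s ≤ 1) : Real.exp s ≤ 1 + 3 * s := by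
  have h2 : 1 - s ≤ Real.exp (-s) := by
    have := Real.add_one_le_exp (-s); linarith
  have h3 : Real.exp s ≤ 3 := by
    calc Real.exp s ≤ Real.exp 1 := Real.exp_le_exp.mpr h1
    _ ≤ 3 := by nlinarith [Real.exp_one_lt_d9]
  have hmul : (1 - s) * Real.exp s ≤ 1 := by
    calc (1 - s) * Real.exp s ≤ Real.exp (-s) * Real.exp s :=
      mul_le_mul_of_nonneg_right h2 (Real.exp_pos s).le
    _ = 1 := by rw [← Real.exp_add]; simp
  nlinarith [Real.exp_pos s]

lemma pow_le_exp_mul {k : ℕ} {x : ℝ} (hx1 : 1 ≤ x) :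
    x ^ (k + 1) ≤ Real.exp (((k:ℝ) + 1) * (x - 1)) := by
  have h : x ≤ Real.exp (x - 1) := by
    have := Real.add_one_le_exp (x - 1); linarith
  calc x ^ (k + 1) ≤ Real.exp (x - 1) ^ (k + 1) :=
    pow_le_pow_left₀ (by linarith) h _
  _ = Real.exp (((k + 1 : ℕ) : ℝ) * (x - 1)) := by rw [← Real.exp_nat_mul]
  _ = Real.exp (((k:ℝ) + 1) * (x - 1)) := by push_cast; ring

lemma X_le_eight {k : ℕ} {x : ℝ} (hk : 1 ≤ k) (hx1 : 1 ≤ x) (hx2 : x ≤ 1 + 1 / (k:ℝ)) :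
    x ^ (k + 1) ≤ 8 := by
  have hkR : (1:ℝ) ≤ (k:ℝ) := by exact_mod_cast hk
  have hK0 : (0:ℝ) < (k:ℝ) := by linarith
  refine (pow_le_exp_mul hx1).trans ?_
  have harg : ((k:ℝ) + 1) * (x - 1) ≤ 2 := by
    have h1 : x - 1 ≤ 1 / (k:ℝ) := by linarith
    have h2 : ((k:ℝ) + 1) * (x - 1) ≤ ((k:ℝ) + 1) * (1 / (k:ℝ)) :=
      mul_le_mul_of_nonneg_left h1 (by linarith)
    have h3 : ((k:ℝ) + 1) * (1 / (k:ℝ)) = 1 + 1 / (k:ℝ) := by field_simp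
    have h4 : 1 / (k:ℝ) ≤ 1 := by rw [div_le_one hK0]; linarith
    linarith
  calc Real.exp (((k:ℝ) + 1) * (x - 1)) ≤ Real.exp 2 := Real.exp_le_exp.mpr harg
  _ ≤ 8 := exp_two_lt_eight.le

lemma q_eq {k : ℕ} (w x : ℝ) (hk : 1 ≤ k) :
    w * k / ((k : ℝ) + 1) ^ 2 * x ^ (k + 1) / (1 - 1 / ((k : ℝ) + 1))
      = w * x ^ (k + 1) / ((k:ℝ) + 1) := by
  have hkR : (1:ℝ) ≤ (k:ℝ) := by exact_mod_cast hk
  have h1 : ((k:ℝ) + 1) ≠ 0 := by linarith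
  have h2 : (k:ℝ) ≠ 0 := by linarith
  field_simp
  ring
  field_simp

lemma q_le {k : ℕ} {w x : ℝ} (hk : 1 ≤ k) (hw : 0 ≤ w) (hx1 : 1 ≤ x) (hx2 : x ≤ 1 + 1 / (k:ℝ)) :
    w * k / ((k : ℝ) + 1) ^ 2 * x ^ (k + 1) / (1 - 1 / ((k : ℝ) + 1)) ≤ 8 * w / (k:ℝ) := by
  have hkR : (1:ℝ) ≤ (k:ℝ) := by exact_mod_cast hk
  have hK0 : (0:ℝ) < (k:ℝ) := by linarith
  rw [q_eq w x hk]
  have h8 := X_le_eight hk hx1 hx2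
  have hnum : w * x ^ (k + 1) ≤ 8 * w := by nlinarith
  calc w * x ^ (k + 1) / ((k:ℝ) + 1) ≤ (8 * w) / ((k:ℝ) + 1) :=
    div_le_div_of_nonneg_right hnum (by linarith)
  _ ≤ 8 * w / (k:ℝ) := by
    apply div_le_div_of_nonneg_left (by linarith) hK0 (by linarith)

lemma ukw_factor (k : ℕ) (w x : ℝ) :
    ukw k w x = Real.exp x * (x * (∑' m, aterm k w x m) - ∑' m, bterm k w x m) := by
  rw [ukw_eq]; ring

set_option maxHeartbeats 1000000 in
/-- The series part is strictly negative on `(1, 1 + (1-δ)2w/k²]`. -/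
lemma g_neg {k : ℕ} {w δ x : ℝ} (hk : 2 ≤ k) (hδ0 : 0 < δ) (hδ1 : δ ≤ 1)
    (hw0 : 0 < w) (hwk : w * (k:ℝ) ≤ 4) (hkδ : 1200 ≤ δ * (k:ℝ))
    (hx1 : 1 < x) (hx2 : x ≤ 1 + (1 - δ) * (2 * w) / (k:ℝ) ^ 2) :
    x * (∑' m, aterm k w x m) - ∑' m, bterm k w x m < 0 := by
  have hk1 : 1 ≤ k := le_trans (by norm_num) hk
  have hkR : (2:ℝ) ≤ (k:ℝ) := by exact_mod_cast hk
  have hK0 : (0:ℝ) < (k:ℝ) := by linarith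
  have hK1200 : 1200 ≤ (k:ℝ) := by nlinarith
  have hw300 : 300 * w ≤ δ := by nlinarith
  have hwtiny : w ≤ 1 / 300 := by nlinarith
  have hx1' : (1:ℝ) ≤ x := hx1.le
  have hxK : x ≤ 1 + 1 / (k:ℝ) := by
    have h1 : (1 - δ) * (2 * w) ≤ 2 * w := by nlinarith
    have h2 : (1 - δ) * (2 * w) / (k:ℝ) ^ 2 ≤ 2 * w / (k:ℝ) ^ 2 :=
      div_le_div_of_nonneg_right h1 (by positivity)
    have h3 : 2 * w / (k:ℝ) ^ 2 ≤ 1 / (k:ℝ) := by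
      rw [div_le_div_iff₀ (by positivity) hK0]
      nlinarith
    linarith
  have hx32 : x ≤ 3 / 2 := by
    have : 1 / (k:ℝ) ≤ 1 / 2 := by
      apply div_le_div_of_nonneg_left (by norm_num) (by norm_num) hkR
    linarith
  have hq8 : w * k / ((k:ℝ) + 1) ^ 2 * x ^ (k + 1) / (1 - 1 / ((k:ℝ) + 1)) ≤ 8 * w / (k:ℝ) :=
    q_le hk1 hw0.le hx1' hxK
  have hq0 : 0 ≤ w * k / ((k:ℝ) + 1) ^ 2 * x ^ (k + 1) / (1 - 1 / ((k:ℝ) + 1)) := by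
    rw [q_eq w x hk1]
    exact div_nonneg (mul_nonneg hw0.le (pow_nonneg (by linarith) _)) (by positivity)
  have hq12 : w * k / ((k:ℝ) + 1) ^ 2 * x ^ (k + 1) / (1 - 1 / ((k:ℝ) + 1)) ≤ 1 / 2 := by
    have : 8 * w / (k:ℝ) ≤ 1 / 2 := by
      rw [div_le_div_iff₀ hK0 (by norm_num)]
      nlinarith
    linarith
  obtain ⟨-, hupper⟩ := g_bounds hk1 hw0.le hx1' hx32 hq12
  obtain ⟨Q, hQg⟩ : ∃ Q, w * (k:ℝ) / ((k:ℝ) + 1) ^ 2 * x ^ (k + 1) / (1 - 1 / ((k:ℝ) + 1)) = Q :=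
    ⟨_, rfl⟩
  rw [hQg] at hq8 hq0 hupper
  have hX8 : x ^ (k + 1) ≤ 8 := X_le_eight hk1 hx1' hxK
  have hX1 : (1:ℝ) ≤ x ^ (k + 1) := by
    calc (1:ℝ) = 1 ^ (k+1) := (one_pow _).symm
    _ ≤ x ^ (k+1) := pow_le_pow_left₀ (by norm_num) hx1' _
  -- T-estimates
  have T1 : x - 1 ≤ (1 - δ) * (2 * w) / (k:ℝ) ^ 2 := by linarith
  have hterm : w * x ^ (k + 1) / ((k:ℝ) + 2) ≤ 8 * w := by
    have h1 : w * x ^ (k + 1) ≤ 8 * w := by nlinarith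
    calc w * x ^ (k + 1) / ((k:ℝ) + 2) ≤ (8 * w) / ((k:ℝ) + 2) :=
      div_le_div_of_nonneg_right h1 (by linarith)
    _ ≤ (8 * w) / 1 := div_le_div_of_nonneg_left (by linarith) one_pos (by linarith)
    _ = 8 * w := by ring
  have T2 : (x - 1) * (w * x ^ (k + 1) / ((k:ℝ) + 2)) ≤ 16 * w ^ 2 / (k:ℝ) ^ 2 := by
    have h0 : 0 ≤ w * x ^ (k + 1) / ((k:ℝ) + 2) :=
      div_nonneg (mul_nonneg hw0.le (by positivity)) (by linarith)
    have h1 : (x - 1) * (w * x ^ (k + 1) / ((k:ℝ) + 2))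
        ≤ ((1 - δ) * (2 * w) / (k:ℝ) ^ 2) * (8 * w) :=
      mul_le_mul T1 hterm h0 (by
        apply div_nonneg ?_ (by positivity)
        nlinarith)
    have h2 : ((1 - δ) * (2 * w) / (k:ℝ) ^ 2) * (8 * w) ≤ 16 * w ^ 2 / (k:ℝ) ^ 2 := by
      have he : 16 * w ^ 2 / (k:ℝ) ^ 2 - ((1 - δ) * (2 * w) / (k:ℝ) ^ 2) * (8 * w)
          = 16 * δ * w ^ 2 / (k:ℝ) ^ 2 := by ring
      have hp : 0 ≤ 16 * δ * w ^ 2 / (k:ℝ) ^ 2 := by positivity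
      linarith
    linarith
  have T3 : 2 * w / (((k:ℝ) + 1) * ((k:ℝ) + 2)) ≤
      2 * w * x ^ (k + 1) / (((k:ℝ) + 1) * ((k:ℝ) + 2)) := by
    apply div_le_div_of_nonneg_right ?_ (by positivity)
    nlinarith
  have T4 : 3 * Q ^ 2 ≤ 192 * w ^ 2 / (k:ℝ) ^ 2 := by
    have h1 := pow_le_pow_left₀ hq0 hq8 2
    have h3 : 3 * ((8 * w / (k:ℝ)) ^ 2) = 192 * w ^ 2 / (k:ℝ) ^ 2 := by
      have hkne : (k:ℝ) ≠ 0 := ne_of_gt hK0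
      field_simp
      ring
    linarith
  -- key strict inequality
  have hE : (1 - δ) * (2 * w) / (k:ℝ) ^ 2 + 16 * w ^ 2 / (k:ℝ) ^ 2 + 192 * w ^ 2 / (k:ℝ) ^ 2
      < 2 * w / (((k:ℝ) + 1) * ((k:ℝ) + 2)) := by
    have hcomb : (1 - δ) * (2 * w) / (k:ℝ) ^ 2 + 16 * w ^ 2 / (k:ℝ) ^ 2
        + 192 * w ^ 2 / (k:ℝ) ^ 2
        = (2 * w * ((1 - δ) + 104 * w)) / (k:ℝ) ^ 2 := by ring
    rw [hcomb, div_lt_div_iff₀ (by positivity) (by positivity)]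
    have hs784 : 784 ≤ (δ - 104 * w) * (k:ℝ) := by nlinarith
    have hs0 : 0 < δ - 104 * w := by nlinarith
    have e1 : ((k:ℝ) + 1) * ((k:ℝ) + 2) ≤ (k:ℝ) ^ 2 + 4 * (k:ℝ) := by nlinarith
    have key : ((1 - δ) + 104 * w) * ((k:ℝ) ^ 2 + 4 * (k:ℝ)) < (k:ℝ) ^ 2 := by
      have hsKK : 784 * (k:ℝ) ≤ ((δ - 104 * w) * (k:ℝ)) * (k:ℝ) :=
        mul_le_mul_of_nonneg_right hs784 hK0.le
      nlinarith [mul_nonneg hs0.le hK0.le]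
    have hfac0 : 0 ≤ (1 - δ) + 104 * w := by nlinarith
    calc 2 * w * ((1 - δ) + 104 * w) * (((k:ℝ) + 1) * ((k:ℝ) + 2))
        ≤ 2 * w * (((1 - δ) + 104 * w) * ((k:ℝ) ^ 2 + 4 * (k:ℝ))) := by
          have := mul_le_mul_of_nonneg_left e1 hfac0
          nlinarith [this]
    _ < 2 * w * (k:ℝ) ^ 2 := by
          have := mul_lt_mul_of_pos_left key (show (0:ℝ) < 2 * w by linarith)
          linarith
  calc x * (∑' m, aterm k w x m) - ∑' m, bterm k w x m
      ≤ (x - 1) + (x - 1) * (w * x ^ (k + 1) / ((k:ℝ) + 2))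
        - 2 * w * x ^ (k + 1) / (((k:ℝ) + 1) * ((k:ℝ) + 2))
        + 3 * Q ^ 2 := hupper
  _ < 0 := by linarith

set_option maxHeartbeats 1000000 in
/-- The series part is strictly positive at `x₀ = 1 + (1+δ)2w/k²`. -/
lemma g_pos {k : ℕ} {w δ x : ℝ} (hk : 2 ≤ k) (hδ0 : 0 < δ) (hδ1 : δ ≤ 1)
    (hw0 : 0 < w) (hwk : w * (k:ℝ) ≤ 4) (hkδ : 1200 ≤ δ * (k:ℝ))
    (hx : x = 1 + (1 + δ) * (2 * w) / (k:ℝ) ^ 2) :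
    0 < x * (∑' m, aterm k w x m) - ∑' m, bterm k w x m := by
  have hk1 : 1 ≤ k := le_trans (by norm_num) hk
  have hkR : (2:ℝ) ≤ (k:ℝ) := by exact_mod_cast hk
  have hK0 : (0:ℝ) < (k:ℝ) := by linarith
  have hK1200 : 1200 ≤ (k:ℝ) := by nlinarith
  have hw300 : 300 * w ≤ δ := by nlinarith
  have hwtiny : w ≤ 1 / 300 := by nlinarith
  have hT0 : 0 < (1 + δ) * (2 * w) / (k:ℝ) ^ 2 := by
    apply div_pos (by nlinarith) (by positivity)
  have hx1 : 1 < x := by rw [hx]; linarith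
  have hx1' : (1:ℝ) ≤ x := hx1.le
  have hxK : x ≤ 1 + 1 / (k:ℝ) := by
    rw [hx]
    have h1 : (1 + δ) * (2 * w) ≤ 4 * w := by nlinarith
    have h2 : (1 + δ) * (2 * w) / (k:ℝ) ^ 2 ≤ 4 * w / (k:ℝ) ^ 2 :=
      div_le_div_of_nonneg_right h1 (by positivity)
    have h3 : 4 * w / (k:ℝ) ^ 2 ≤ 1 / (k:ℝ) := by
      rw [div_le_div_iff₀ (by positivity) hK0]
      nlinarith
    linarith
  have hx32 : x ≤ 3 / 2 := by
    have : 1 / (k:ℝ) ≤ 1 / 2 := by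
      apply div_le_div_of_nonneg_left (by norm_num) (by norm_num) hkR
    linarith
  have hq8 : w * k / ((k:ℝ) + 1) ^ 2 * x ^ (k + 1) / (1 - 1 / ((k:ℝ) + 1)) ≤ 8 * w / (k:ℝ) :=
    q_le hk1 hw0.le hx1' hxK
  have hq0 : 0 ≤ w * k / ((k:ℝ) + 1) ^ 2 * x ^ (k + 1) / (1 - 1 / ((k:ℝ) + 1)) := by
    rw [q_eq w x hk1]
    exact div_nonneg (mul_nonneg hw0.le (pow_nonneg (by linarith) _)) (by positivity)
  have hq12 : w * k / ((k:ℝ) + 1) ^ 2 * x ^ (k + 1) / (1 - 1 / ((k:ℝ) + 1)) ≤ 1 / 2 := by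
    have : 8 * w / (k:ℝ) ≤ 1 / 2 := by
      rw [div_le_div_iff₀ hK0 (by norm_num)]
      nlinarith
    linarith
  obtain ⟨hlower, -⟩ := g_bounds hk1 hw0.le hx1' hx32 hq12
  obtain ⟨Q, hQg⟩ : ∃ Q, w * (k:ℝ) / ((k:ℝ) + 1) ^ 2 * x ^ (k + 1) / (1 - 1 / ((k:ℝ) + 1)) = Q :=
    ⟨_, rfl⟩
  rw [hQg] at hq8 hq0 hlower
  -- X ≤ 1 + 12w
  have hX12 : x ^ (k + 1) ≤ 1 + 12 * w := by
    have h1 : x ^ (k + 1) ≤ Real.exp (((k:ℝ) + 1) * (x - 1)) := pow_le_exp_mul hx1'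
    have he : x - 1 = (1 + δ) * (2 * w) / (k:ℝ) ^ 2 := by rw [hx]; ring
    have harg0 : 0 ≤ ((k:ℝ) + 1) * (x - 1) := by
      apply mul_nonneg (by linarith)
      rw [he]; exact hT0.le
    have harg : ((k:ℝ) + 1) * (x - 1) ≤ 4 * w := by
      rw [he]
      have hr : (k:ℝ) + 1 ≤ (k:ℝ) ^ 2 := by nlinarith
      have hstep : ((k:ℝ) + 1) * ((1 + δ) * (2 * w) / (k:ℝ) ^ 2)
          ≤ (k:ℝ) ^ 2 * ((1 + δ) * (2 * w) / (k:ℝ) ^ 2) :=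
        mul_le_mul_of_nonneg_right hr hT0.le
      have hcanc : (k:ℝ) ^ 2 * ((1 + δ) * (2 * w) / (k:ℝ) ^ 2) = (1 + δ) * (2 * w) := by
        field_simp
      have hfin : (1 + δ) * (2 * w) ≤ 4 * w := by nlinarith
      linarith
    have harg1 : ((k:ℝ) + 1) * (x - 1) ≤ 1 := by nlinarith
    have h2 := exp_le_one_add_three harg0 harg1
    have h3 : 1 + 3 * (((k:ℝ) + 1) * (x - 1)) ≤ 1 + 12 * w := by linarith
    calc x ^ (k + 1) ≤ Real.exp (((k:ℝ) + 1) * (x - 1)) := h1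
    _ ≤ 1 + 3 * (((k:ℝ) + 1) * (x - 1)) := h2
    _ ≤ 1 + 12 * w := h3
  -- positivity of the lower estimate
  have hA : 2 * w * x ^ (k + 1) / (((k:ℝ) + 1) * ((k:ℝ) + 2))
      ≤ 2 * w * (1 + 12 * w) / (k:ℝ) ^ 2 := by
    apply div_le_div₀ (by nlinarith) (by nlinarith) (by positivity) (by nlinarith)
  have hB : 2 * Q ^ 2 ≤ 128 * w ^ 2 / (k:ℝ) ^ 2 := by
    have h1 := pow_le_pow_left₀ hq0 hq8 2
    have h3 : 2 * ((8 * w / (k:ℝ)) ^ 2) = 128 * w ^ 2 / (k:ℝ) ^ 2 := by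
      have hkne : (k:ℝ) ≠ 0 := ne_of_gt hK0
      field_simp
      ring
    linarith
  have hfin : 2 * w * (1 + 12 * w) / (k:ℝ) ^ 2 + 128 * w ^ 2 / (k:ℝ) ^ 2
      < (1 + δ) * (2 * w) / (k:ℝ) ^ 2 := by
    have hcomb : 2 * w * (1 + 12 * w) / (k:ℝ) ^ 2 + 128 * w ^ 2 / (k:ℝ) ^ 2
        = (2 * w * (1 + 12 * w) + 128 * w ^ 2) / (k:ℝ) ^ 2 := by ring
    rw [hcomb, div_lt_div_iff₀ (by positivity) (by positivity)]
    apply mul_lt_mul_of_pos_right ?_ (by positivity)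
    nlinarith [mul_pos hw0 hw0, mul_le_mul_of_nonneg_left hw300 hw0.le]
  have he : x - 1 = (1 + δ) * (2 * w) / (k:ℝ) ^ 2 := by rw [hx]; ring
  calc (0:ℝ) < (x - 1) - 2 * w * x ^ (k + 1) / (((k:ℝ) + 1) * ((k:ℝ) + 2)) - 2 * Q ^ 2 := by
        linarith
  _ ≤ x * (∑' m, aterm k w x m) - ∑' m, bterm k w x m := hlower

set_option maxHeartbeats 1000000 in
/-- Location of the smallest positive zero. -/
lemma rho_loc {k : ℕ} {w ρ δ : ℝ} (hk : 2 ≤ k) (hδ0 : 0 < δ) (hδ1 : δ ≤ 1)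
    (hw0 : 0 < w) (hwk : w * (k:ℝ) ≤ 4) (hkδ : 1200 ≤ δ * (k:ℝ))
    (hρ1 : 1 < ρ) (hzero : ukw k w ρ = 0)
    (hmin : ∀ x ∈ Set.Ioo (0:ℝ) ρ, ukw k w x ≠ 0) :
    1 + (1 - δ) * (2 * w) / (k:ℝ) ^ 2 < ρ ∧ ρ ≤ 1 + (1 + δ) * (2 * w) / (k:ℝ) ^ 2 := by
  have hk1 : 1 ≤ k := le_trans (by norm_num) hk
  have hkR : (2:ℝ) ≤ (k:ℝ) := by exact_mod_cast hk
  have hK0 : (0:ℝ) < (k:ℝ) := by linarith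
  have hK1200 : 1200 ≤ (k:ℝ) := by nlinarith
  have hw300 : 300 * w ≤ δ := by nlinarith
  have hwtiny : w ≤ 1 / 300 := by nlinarith
  have hg0 : ρ * (∑' m, aterm k w ρ m) - ∑' m, bterm k w ρ m = 0 := by
    have h := ukw_factor k w ρ
    rw [hzero] at h
    exact (mul_eq_zero.mp h.symm).resolve_left (Real.exp_ne_zero ρ)
  constructor
  · by_contra hcon
    push_neg at hcon
    have := g_neg hk hδ0 hδ1 hw0 hwk hkδ hρ1 hcon
    linarith
  · by_contra hcon
    push_neg at hcon
    have hT0 : 0 < (1 + δ) * (2 * w) / (k:ℝ) ^ 2 := div_pos (by nlinarith) (by positivity)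
    have hgx₀ := g_pos (x := 1 + (1 + δ) * (2 * w) / (k:ℝ) ^ 2) hk hδ0 hδ1 hw0 hwk hkδ rfl
    have hupos : 0 < ukw k w (1 + (1 + δ) * (2 * w) / (k:ℝ) ^ 2) := by
      rw [ukw_factor]
      exact mul_pos (Real.exp_pos _) hgx₀
    have hx₀2 : 1 + (1 + δ) * (2 * w) / (k:ℝ) ^ 2 ≤ 2 := by
      have h1 : (1 + δ) * (2 * w) ≤ (k:ℝ) ^ 2 := by nlinarith
      have h2 : (1 + δ) * (2 * w) / (k:ℝ) ^ 2 ≤ 1 := by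
        rw [div_le_one (by positivity)]; exact h1
      linarith
    have hcont : ContinuousOn (ukw k w) (Set.Icc 0 (1 + (1 + δ) * (2 * w) / (k:ℝ) ^ 2)) :=
      (ukw_continuousOn hk1 hw0.le).mono (Set.Icc_subset_Icc le_rfl hx₀2)
    have hivt := intermediate_value_Ioo
      (by linarith : (0:ℝ) ≤ 1 + (1 + δ) * (2 * w) / (k:ℝ) ^ 2) hcont
    have hmem : (0:ℝ) ∈ Set.Ioo (ukw k w 0) (ukw k w (1 + (1 + δ) * (2 * w) / (k:ℝ) ^ 2)) := by
      rw [ukw_zero_eval]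
      exact ⟨by norm_num, hupos⟩
    obtain ⟨z, hz, hz0⟩ := hivt hmem
    exact hmin z ⟨hz.1, lt_trans hz.2 hcon⟩ hz0

lemma wk_bound {k : ℕ} {w : ℝ} (hk : 2 ≤ k) (hwle : w ≤ 1 / 2 ^ (k - 2)) :
    w * (k:ℝ) ≤ 4 := by
  have hK0 : (0:ℝ) ≤ (k:ℝ) := Nat.cast_nonneg k
  have hpow : (2:ℝ) ^ (k - 2) * 4 = (2:ℝ) ^ k := by
    have hadd : k - 2 + 2 = k := Nat.sub_add_cancel hk
    calc (2:ℝ) ^ (k - 2) * 4 = (2:ℝ) ^ (k - 2) * (2:ℝ) ^ 2 := by norm_num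
    _ = (2:ℝ) ^ (k - 2 + 2) := (pow_add 2 _ 2).symm
    _ = (2:ℝ) ^ k := by rw [hadd]
  have hkpow : (k:ℝ) < (2:ℝ) ^ k := by exact_mod_cast Nat.lt_two_pow_self
  have hp0 : (0:ℝ) < (2:ℝ) ^ (k - 2) := by positivity
  have h1 : w * (k:ℝ) ≤ (1 / 2 ^ (k - 2)) * (k:ℝ) := mul_le_mul_of_nonneg_right hwle hK0
  have h2 : (1 / (2:ℝ) ^ (k - 2)) * (k:ℝ) ≤ 4 := by
    rw [div_mul_eq_mul_div, one_mul, div_le_iff₀ hp0]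
    nlinarith
  linarith


/-- If for each `k ≥ 2`, `0 < w k ≤ 1/2^(k-2)` and `ρ k > 1` is the smallest
positive zero of `u_{k, w k}`, then `k² (ρ k - 1)/(2 w k) → 1` as `k → ∞`, i.e.
`ρ̃ = 1 + ε ~ 1 + 2 w k / k²`. -/
theorem stmt10 (w ρ : ℕ → ℝ)
    (hw : ∀ k : ℕ, 2 ≤ k → 0 < w k ∧ w k ≤ 1 / 2 ^ (k - 2))
    (hρ : ∀ k : ℕ, 2 ≤ k → 1 < ρ k ∧ ukw k (w k) (ρ k) = 0 ∧
      ∀ x ∈ Set.Ioo (0 : ℝ) (ρ k), ukw k (w k) x ≠ 0) :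
    Filter.Tendsto (fun k : ℕ => (k : ℝ) ^ 2 * (ρ k - 1) / (2 * w k))
      Filter.atTop (nhds 1) := by
  rw [Metric.tendsto_atTop]
  intro ε hε
  obtain ⟨δ, hδ0, hδ1, hδε⟩ : ∃ δ : ℝ, 0 < δ ∧ δ ≤ 1 ∧ δ < ε :=
    ⟨min (ε / 2) 1, lt_min (by linarith) one_pos, min_le_right _ _,
      lt_of_le_of_lt (min_le_left _ _) (by linarith)⟩
  refine ⟨max 2 ⌈1200 / δ⌉₊, fun n hn => ?_⟩
  have hn2 : 2 ≤ n := le_trans (le_max_left _ _) hn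
  obtain ⟨hw0, hwle⟩ := hw n hn2
  obtain ⟨hρ1, hzero, hmin⟩ := hρ n hn2
  have hwk4 := wk_bound hn2 hwle
  have hceil : 1200 / δ ≤ (n:ℝ) := by
    have h1 : ⌈1200 / δ⌉₊ ≤ n := le_trans (le_max_right _ _) hn
    exact Nat.ceil_le.mp h1
  have hkδ : 1200 ≤ δ * (n:ℝ) := by
    rw [div_le_iff₀ hδ0] at hceil; linarith
  obtain ⟨hlow, hupp⟩ := rho_loc hn2 hδ0 hδ1 hw0 hwk4 hkδ hρ1 hzero hmin
  have hkR : (2:ℝ) ≤ (n:ℝ) := by exact_mod_cast hn2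
  have hK2 : (0:ℝ) < (n:ℝ) ^ 2 := by positivity
  have h2w : (0:ℝ) < 2 * w n := by linarith
  have hL1 : (n:ℝ) ^ 2 * (ρ n - 1) / (2 * w n) ≤ 1 + δ := by
    rw [div_le_iff₀ h2w]
    have h' : ρ n - 1 ≤ (1 + δ) * (2 * w n) / (n:ℝ) ^ 2 := by linarith
    rw [le_div_iff₀ hK2] at h'
    nlinarith [h']
  have hL2 : 1 - δ < (n:ℝ) ^ 2 * (ρ n - 1) / (2 * w n) := by
    rw [lt_div_iff₀ h2w]
    have h' : (1 - δ) * (2 * w n) / (n:ℝ) ^ 2 < ρ n - 1 := by linarith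
    rw [div_lt_iff₀ hK2] at h'
    nlinarith [h']
  rw [Real.dist_eq, abs_lt]
  constructor <;> linarith
end

section
/- There exists an integer K such that for all integers k ≥ K and all real w with 0 < w ≤ 1/2^{k-2}, the function u_{k,w} satisfies u_{k,w}(1 + 1/k²) > 0 (while u_{k,w}(0) = −1 < 0); in particular u_{k,w} has a zero in the interval (0, 1 + 1/k²). -/
open scoped BigOperators

lemma fallFact_ge_half_pow (x : ℝ) (m : ℕ) (h : ∀ j ∈ Finset.range m, (1:ℝ)/2 ≤ x - j) :
    ((1:ℝ)/2) ^ m ≤ fallFact x m := by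
  unfold fallFact
  calc ((1:ℝ)/2) ^ m = ∏ _j ∈ Finset.range m, ((1:ℝ)/2) := by
        rw [Finset.prod_const, Finset.card_range]
    _ ≤ _ := Finset.prod_le_prod (fun i _ => by norm_num) h

lemma ukw_term_le (b zv x d : ℝ) (N m : ℕ) (hb : 0 ≤ b)
    (hd : ((1:ℝ)/2) ^ m ≤ d) (hx0 : 0 ≤ x) (hxz : x ≤ zv) :
    b ^ m * x ^ (N * m) / ((Nat.factorial m : ℝ) * d) ≤ (2 * (b * zv ^ N)) ^ m := by
  have hnum : b ^ m * x ^ (N * m) ≤ (b * zv ^ N) ^ m := by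
    rw [pow_mul, mul_pow]
    exact mul_le_mul_of_nonneg_left
      (pow_le_pow_left₀ (pow_nonneg hx0 N) (pow_le_pow_left₀ hx0 hxz N) m) (pow_nonneg hb m)
  have hden : ((1:ℝ)/2) ^ m ≤ (Nat.factorial m : ℝ) * d := by
    have h1 : (1:ℝ) ≤ (Nat.factorial m : ℝ) := by exact_mod_cast (Nat.factorial_pos m)
    have h2 : (0:ℝ) < ((1:ℝ)/2) ^ m := by positivity
    nlinarith
  have he : (2 * (b * zv ^ N)) ^ m = (b * zv ^ N) ^ m / ((1:ℝ)/2) ^ m := by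
    rw [← div_pow]; congr 1; ring
  rw [he]
  have hzv : 0 ≤ zv := hx0.trans hxz
  exact div_le_div₀ (pow_nonneg (mul_nonneg hb (pow_nonneg hzv N)) m) hnum (by positivity) hden

set_option maxHeartbeats 1000000 in
/-- There is `K` such that for all `k ≥ K` and all `0 < w ≤ 1/2^(k-2)` we have
`u_{k,w}(1 + 1/k²) > 0` while `u_{k,w}(0) = -1 < 0`; in particular `u_{k,w}` has a zero in
`(0, 1 + 1/k²)`. -/
theorem stmt11 : ∃ K : ℕ, ∀ k : ℕ, K ≤ k → ∀ w : ℝ, 0 < w → w ≤ 1 / 2 ^ (k - 2) →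
    0 < ukw k w (1 + 1 / (k : ℝ) ^ 2) ∧ ukw k w 0 = -1 ∧
      ∃ x ∈ Set.Ioo (0 : ℝ) (1 + 1 / (k : ℝ) ^ 2), ukw k w x = 0 := by
  refine ⟨16, fun k hk w hw0 hw2 => ?_⟩
  have hkR : (16:ℝ) ≤ (k:ℝ) := by exact_mod_cast hk
  have hk0 : (0:ℝ) < (k:ℝ) := by linarith
  set b : ℝ := w * (k:ℝ) / ((k:ℝ) + 1) ^ 2 with hb_def
  set z : ℝ := 1 + 1 / (k:ℝ) ^ 2 with hz_def
  clear_value b z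
  have hb0 : 0 < b := by
    rw [hb_def]; exact div_pos (mul_pos hw0 hk0) (by positivity)
  have hik : 0 < 1 / (k:ℝ)^2 := by positivity
  have hz1 : 1 < z := by rw [hz_def]; linarith
  have hz0 : (0:ℝ) < z := by linarith
  have hz2 : z ≤ 2 := by
    rw [hz_def]
    have : 1/(k:ℝ)^2 ≤ 1 := by
      rw [div_le_one (by positivity)]; nlinarith
    linarith
  have hzpow : z ^ (k+1) ≤ 3 := by
    have h1 : z ≤ Real.exp (1/(k:ℝ)^2) := by
      have := Real.add_one_le_exp (1/(k:ℝ)^2)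
      rw [hz_def]; linarith
    calc z ^ (k+1) ≤ Real.exp (1/(k:ℝ)^2) ^ (k+1) := pow_le_pow_left₀ (le_of_lt hz0) h1 _
      _ = Real.exp (((k:ℕ)+1 : ℕ) * (1/(k:ℝ)^2)) := by rw [← Real.exp_nat_mul]
      _ ≤ Real.exp 1 := by
          apply Real.exp_le_exp.mpr
          rw [mul_one_div, div_le_one (by positivity)]
          push_cast; nlinarith
      _ ≤ 3 := by linarith [Real.exp_one_lt_d9]
  set c : ℝ := b * z ^ (k+1) with hc_def
  clear_value c
  have hc0 : 0 < c := by rw [hc_def]; exact mul_pos hb0 (pow_pos hz0 _)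
  -- w ≤ 4 / 2^k
  have hw4 : w ≤ 4 / 2^k := by
    have e1 : ((2:ℝ))^k = 2^(k-2) * 4 := by
      have hkk : k - 2 + 2 = k := by omega
      calc (2:ℝ)^k = 2^(k-2+2) := by rw [hkk]
        _ = 2^(k-2) * 2^2 := pow_add 2 _ _
        _ = 2^(k-2) * 4 := by norm_num
    have h2 : (0:ℝ) < 2^(k-2) := by positivity
    rw [e1]
    calc w ≤ 1 / 2^(k-2) := hw2
      _ = 4 / (2^(k-2) * 4) := by field_simp
  -- 48 k < 2^k
  have h48 : 48 * (k:ℝ) < 2^k := by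
    have hnat : 48 * k < 2^k := by
      obtain ⟨n, rfl⟩ : ∃ n, k = 16 + n := ⟨k - 16, by omega⟩
      calc 48 * (16+n) < 65536 * (n+1) := by omega
        _ ≤ 65536 * 2^n := Nat.mul_le_mul_left _ (by have := Nat.lt_two_pow_self (n := n); omega)
        _ = 2^(16+n) := by rw [pow_add]; norm_num
    exact_mod_cast hnat
  have h2kpos : (0:ℝ) < 2^k := by positivity
  have hbb : b ≤ 4 / (2^k * (k:ℝ)) := by
    rw [hb_def]
    have h1 : w * (k:ℝ) ≤ 4/2^k * (k:ℝ) := mul_le_mul_of_nonneg_right hw4 hk0.le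
    calc w * (k:ℝ) / ((k:ℝ)+1)^2 ≤ (4/2^k * (k:ℝ)) / (k:ℝ)^2 := by
          apply div_le_div₀ (by positivity) h1 (by positivity) (by nlinarith)
      _ = 4/(2^k * (k:ℝ)) := by field_simp
  have hc4 : 4 * c < 1 / (k:ℝ)^2 := by
    have hcc : c ≤ 12 / (2^k * (k:ℝ)) := by
      rw [hc_def]
      calc b * z^(k+1) ≤ (4/(2^k*(k:ℝ))) * 3 :=
            mul_le_mul hbb hzpow (pow_pos hz0 _).le (by positivity)
        _ = 12/(2^k*(k:ℝ)) := by ring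
    have h2 : 48/(2^k*(k:ℝ)) < 1/(k:ℝ)^2 := by
      rw [div_lt_div_iff₀ (by positivity) (by positivity)]
      nlinarith
    have h4 : 48/(2^k*(k:ℝ)) = 4*(12/(2^k*(k:ℝ))) := by ring
    linarith
  have hik1 : 1/(k:ℝ)^2 ≤ 1 := by
    rw [div_le_one (by positivity)]; nlinarith
  have hc1 : 2 * c < 1/2 := by linarith
  -- denominator bounds
  have hα0 : (0:ℝ) < 1/((k:ℝ)+1) := by positivity
  have hα2 : 1/((k:ℝ)+1) ≤ 1/2 := by
    rw [div_le_div_iff₀ (by linarith) (by norm_num)]; linarith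
  have hd1 : ∀ m : ℕ, ((1:ℝ)/2)^m ≤ fallFact ((m:ℝ) + 1/((k:ℝ)+1)) m := by
    intro m
    apply fallFact_ge_half_pow
    intro j hj
    have hj' : (j:ℝ) + 1 ≤ (m:ℝ) := by exact_mod_cast Finset.mem_range.mp hj
    linarith
  have hd2 : ∀ m : ℕ, ((1:ℝ)/2)^m ≤ fallFact ((m:ℝ) - 1/((k:ℝ)+1)) m := by
    intro m
    apply fallFact_ge_half_pow
    intro j hj
    have hj' : (j:ℝ) + 1 ≤ (m:ℝ) := by exact_mod_cast Finset.mem_range.mp hj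
    linarith
  -- generic facts about the two series
  have hnonneg : ∀ (d : ℕ → ℝ), (∀ m, ((1:ℝ)/2)^m ≤ d m) → ∀ (m : ℕ) (x : ℝ), 0 ≤ x →
      0 ≤ b^m * x^((k+1)*m)/((Nat.factorial m : ℝ) * d m) := by
    intro d hd m x hx0
    have hdm : 0 < d m := lt_of_lt_of_le (by positivity) (hd m)
    positivity
  have hterm_le : ∀ (d : ℕ → ℝ), (∀ m, ((1:ℝ)/2)^m ≤ d m) → ∀ (m : ℕ) (x : ℝ), 0 ≤ x → x ≤ z →
      b^m * x^((k+1)*m)/((Nat.factorial m : ℝ) * d m) ≤ (2*c)^m := by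
    intro d hd m x hx0 hxz
    have := ukw_term_le b z x (d m) (k+1) m hb0.le (hd m) hx0 hxz
    rwa [← hc_def] at this
  have hgsum : Summable (fun m : ℕ => (2*c)^m) :=
    summable_geometric_of_lt_one (by linarith) (by linarith)
  have hsum : ∀ (d : ℕ → ℝ), (∀ m, ((1:ℝ)/2)^m ≤ d m) → ∀ (x : ℝ), 0 ≤ x → x ≤ z →
      Summable (fun m : ℕ => b^m * x^((k+1)*m)/((Nat.factorial m : ℝ) * d m)) :=
    fun d hd x hx0 hxz => Summable.of_nonneg_of_le
      (fun m => hnonneg d hd m x hx0) (fun m => hterm_le d hd m x hx0 hxz) hgsum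
  -- positivity at z
  have hpos : 0 < ukw k w z := by
    rw [ukw, ← hb_def]
    set S1 := ∑' (m:ℕ), b^m * z^((k+1)*m) /
        ((Nat.factorial m : ℝ) * fallFact ((m:ℝ) + 1/((k:ℝ)+1)) m) with hS1def
    set S2 := ∑' (m:ℕ), b^m * z^((k+1)*m) /
        ((Nat.factorial m : ℝ) * fallFact ((m:ℝ) - 1/((k:ℝ)+1)) m) with hS2def
    clear_value S1 S2
    have h1 : 1 ≤ S1 := by
      rw [hS1def]
      refine le_trans (le_of_eq ?_)
        (Summable.le_tsum (hsum _ hd1 z hz0.le le_rfl) 0 (fun j _ => hnonneg _ hd1 j z hz0.le))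
      simp [fallFact]
    have h2 : S2 ≤ (1 - 2*c)⁻¹ := by
      rw [hS2def]
      calc _ ≤ ∑' (m:ℕ), (2*c)^m :=
            Summable.tsum_le_tsum (fun m => hterm_le _ hd2 m z hz0.le le_rfl)
              (hsum _ hd2 z hz0.le le_rfl) hgsum
        _ = (1-2*c)⁻¹ := tsum_geometric_of_lt_one (by linarith) (by linarith)
    have hkey : (1 - 2*c)⁻¹ < z := by
      have hpos2 : (0:ℝ) < 1 - 2*c := by linarith
      rw [inv_eq_one_div, div_lt_iff₀ hpos2]
      have hcz : 2*c*z ≤ 4*c := by nlinarith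
      have : z = 1 + 1/(k:ℝ)^2 := hz_def
      nlinarith
    have e1 : Real.exp z * S2 ≤ Real.exp z * (1-2*c)⁻¹ :=
      mul_le_mul_of_nonneg_left h2 (Real.exp_pos z).le
    have e2 : Real.exp z * (1-2*c)⁻¹ < Real.exp z * z :=
      mul_lt_mul_of_pos_left hkey (Real.exp_pos z)
    have e3 : z * Real.exp z ≤ z * Real.exp z * S1 :=
      le_mul_of_one_le_right (by positivity) h1
    nlinarith [Real.exp_pos z]
  -- value at 0
  have hzero : ukw k w 0 = -1 := by
    rw [ukw]
    have hside : ∀ (d : ℕ → ℝ) (m : ℕ), m ≠ 0 →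
        (w * (k:ℝ) / ((k:ℝ) + 1) ^ 2) ^ m * (0:ℝ) ^ ((k + 1) * m) /
          ((Nat.factorial m : ℝ) * d m) = 0 := by
      intro d m hm
      have : (k+1) * m ≠ 0 := Nat.mul_ne_zero (Nat.succ_ne_zero k) hm
      simp [zero_pow this]
    rw [tsum_eq_single 0 (hside _), tsum_eq_single 0 (hside _)]
    simp [fallFact]
  -- continuity and IVT
  have hcont : ContinuousOn (ukw k w) (Set.Icc 0 z) := by
    have key : ∀ (d : ℕ → ℝ), (∀ m, ((1:ℝ)/2)^m ≤ d m) →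
        ContinuousOn (fun x : ℝ => ∑' (m:ℕ), b^m * x^((k+1)*m) /
          ((Nat.factorial m : ℝ) * d m)) (Set.Icc 0 z) := by
      intro d hd
      rw [continuousOn_iff_continuous_restrict]
      show Continuous fun p : Set.Icc (0:ℝ) z => ∑' (m:ℕ), b^m * (p:ℝ)^((k+1)*m) /
        ((Nat.factorial m : ℝ) * d m)
      refine continuous_tsum (u := fun m => (2*c)^m) ?_ hgsum ?_
      · intro m
        exact (continuous_const.mul ((continuous_subtype_val).pow _)).div_const _
      · intro m p
        rw [Real.norm_eq_abs, abs_of_nonneg (hnonneg d hd m p p.2.1)]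
        exact hterm_le d hd m p p.2.1 p.2.2
    have hrw : ukw k w = fun x : ℝ => x * Real.exp x * (∑' (m:ℕ), b^m * x^((k+1)*m) /
          ((Nat.factorial m : ℝ) * fallFact ((m:ℝ) + 1/((k:ℝ)+1)) m))
        - Real.exp x * (∑' (m:ℕ), b^m * x^((k+1)*m) /
          ((Nat.factorial m : ℝ) * fallFact ((m:ℝ) - 1/((k:ℝ)+1)) m)) := by
      funext x; rw [ukw, hb_def]
    rw [hrw]
    exact ((continuousOn_id.mul (Real.continuous_exp.continuousOn)).mul
        (key _ hd1)).sub ((Real.continuous_exp.continuousOn).mul (key _ hd2))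
  have h0mem : (0:ℝ) ∈ Set.Ioo (ukw k w 0) (ukw k w z) := by
    rw [hzero]; exact ⟨by norm_num, hpos⟩
  obtain ⟨x, hx, hfx⟩ := intermediate_value_Ioo hz0.le hcont h0mem
  exact ⟨hpos, hzero, x, hx, hfx⟩
end

section
/- For every δ with 0 < δ < 2 there exists an integer K such that for all integers k ≥ K and all real w with 0 < w ≤ 1/2^{k-2} the following holds: let u_{k,w} be extended to the complex plane by its power series, and suppose ρ̃ > 1 is a real number with u_{k,w}(ρ̃) = 0 and u_{k,w}(x) ≠ 0 for all x ∈ (0, ρ̃). Then u_{k,w} has no complex zero z with ρ̃ < |z| < 1 + (2−δ)·(ln k)/k. -/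
open scoped BigOperators

/-- The falling factorial `(x)_m = x (x-1) ⋯ (x-m+1)` of a complex number. -/
noncomputable def fallFactC (x : ℂ) (m : ℕ) : ℂ := ∏ j ∈ Finset.range m, (x - j)

/-- The entire function `u_{k,w}`, extended to the complex plane by its power series; it is the
solution of `u'' - 2u' + (1 - w k z^(k-1)) u = 0` with `u(0) = -1`, `u'(0) = 0`. -/
noncomputable def ukwC (k : ℕ) (w : ℝ) (z : ℂ) : ℂ :=
  z * Complex.exp z * ∑' m : ℕ, ((w : ℂ) * k / ((k : ℂ) + 1) ^ 2) ^ m * z ^ ((k + 1) * m) /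
      ((Nat.factorial m : ℂ) * fallFactC ((m : ℂ) + 1 / ((k : ℂ) + 1)) m)
    - Complex.exp z * ∑' m : ℕ, ((w : ℂ) * k / ((k : ℂ) + 1) ^ 2) ^ m * z ^ ((k + 1) * m) /
      ((Nat.factorial m : ℂ) * fallFactC ((m : ℂ) - 1 / ((k : ℂ) + 1)) m)

lemma prod_sub_eq_factorial (m : ℕ) :
    ∏ j ∈ Finset.range m, ((m:ℝ) - j) = m.factorial := by
  have h : ∏ j ∈ Finset.range m, ((m:ℝ) - j) = ((∏ j ∈ Finset.range m, (m - j) : ℕ) : ℝ) := by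
    rw [Nat.cast_prod]
    refine Finset.prod_congr rfl fun j hj => ?_
    have := Finset.mem_range.mp hj
    rw [Nat.cast_sub (le_of_lt this)]
  rw [h]
  norm_cast
  calc ∏ j ∈ Finset.range m, (m - j) = ∏ j ∈ Finset.range m, (j + 1) := by
        rw [← Finset.prod_range_reflect]
        refine Finset.prod_congr rfl fun j hj => ?_
        have := Finset.mem_range.mp hj
        congr 1
        omega
    _ = m.factorial := Finset.prod_range_add_one_eq_factorial m

lemma norm_fall_add (k m : ℕ) :
    (m.factorial : ℝ) ≤ ‖fallFactC ((m:ℂ) + 1/((k:ℂ)+1)) m‖ := by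
  have hcast : fallFactC ((m:ℂ) + 1/((k:ℂ)+1)) m
      = ((∏ j ∈ Finset.range m, ((m:ℝ) + 1/((k:ℝ)+1) - j)) : ℝ) := by
    rw [fallFactC]
    push_cast
    rfl
  have hpos : ∀ j ∈ Finset.range m, (0:ℝ) ≤ (m:ℝ) - j := by
    intro j hj
    have h := Finset.mem_range.mp hj
    have : (j:ℝ) ≤ m := by exact_mod_cast h.le
    linarith
  have hle : ∏ j ∈ Finset.range m, ((m:ℝ) - j)
      ≤ ∏ j ∈ Finset.range m, ((m:ℝ) + 1/((k:ℝ)+1) - j) := by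
    refine Finset.prod_le_prod hpos fun j hj => ?_
    have h2 : (0:ℝ) ≤ 1/((k:ℝ)+1) := by positivity
    linarith
  rw [hcast, Complex.norm_real]
  rw [prod_sub_eq_factorial] at hle
  calc (m.factorial : ℝ) ≤ ∏ j ∈ Finset.range m, ((m:ℝ) + 1/((k:ℝ)+1) - j) := hle
    _ ≤ |∏ j ∈ Finset.range m, ((m:ℝ) + 1/((k:ℝ)+1) - j)| := le_abs_self _

lemma norm_fall_sub (k m : ℕ) (hk : 1 ≤ k) :
    (m.factorial : ℝ) / 2^m ≤ ‖fallFactC ((m:ℂ) - 1/((k:ℂ)+1)) m‖ := by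
  have hcast : fallFactC ((m:ℂ) - 1/((k:ℂ)+1)) m
      = ((∏ j ∈ Finset.range m, ((m:ℝ) - 1/((k:ℝ)+1) - j)) : ℝ) := by
    rw [fallFactC]
    push_cast
    rfl
  have hhalf : 1/((k:ℝ)+1) ≤ 1/2 := by
    have : (2:ℝ) ≤ (k:ℝ)+1 := by
      have : (1:ℝ) ≤ k := by exact_mod_cast hk
      linarith
    rw [div_le_div_iff₀ (by linarith) (by norm_num)]
    linarith
  have hle : ∏ j ∈ Finset.range m, (((m:ℝ) - j)/2)
      ≤ ∏ j ∈ Finset.range m, ((m:ℝ) - 1/((k:ℝ)+1) - j) := by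
    refine Finset.prod_le_prod (fun j hj => ?_) (fun j hj => ?_)
    · have h := Finset.mem_range.mp hj
      have : (j:ℝ) ≤ m := by exact_mod_cast h.le
      linarith
    · have h := Finset.mem_range.mp hj
      have h1 : (j:ℝ) + 1 ≤ m := by exact_mod_cast h
      linarith
  rw [Finset.prod_div_distrib, Finset.prod_const, prod_sub_eq_factorial,
    Finset.card_range] at hle
  rw [hcast, Complex.norm_real]
  exact hle.trans (le_abs_self _)

lemma norm_pow_sub_pow (z w : ℂ) (R : ℝ) (hz : ‖z‖ ≤ R) (hw : ‖w‖ ≤ R) (n : ℕ)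
    (hR : 0 ≤ R) : ‖z^n - w^n‖ ≤ n * R^(n-1) * ‖z - w‖ := by
  rw [← geom_sum₂_mul, norm_mul]
  gcongr ?_ * _
  calc ‖∑ i ∈ Finset.range n, z ^ i * w ^ (n - 1 - i)‖
      ≤ ∑ i ∈ Finset.range n, ‖z ^ i * w ^ (n - 1 - i)‖ := norm_sum_le _ _
    _ ≤ ∑ i ∈ Finset.range n, R^(n-1) := by
        refine Finset.sum_le_sum fun i hi => ?_
        have hin := Finset.mem_range.mp hi
        rw [norm_mul, norm_pow, norm_pow]
        calc ‖z‖^i * ‖w‖^(n-1-i) ≤ R^i * R^(n-1-i) := by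
              gcongr <;> exact norm_nonneg _
          _ = R^(n-1) := by rw [← pow_add]; congr 1; omega
    _ = n * R^(n-1) := by rw [Finset.sum_const, Finset.card_range, nsmul_eq_mul]

lemma pow6_le_two_pow : ∀ k : ℕ, 100 ≤ k → k^6 ≤ 2^k := by
  intro k hk
  induction k, hk using Nat.le_induction with
  | base => norm_num
  | succ k hk ih =>
    have h1 : 100*(k+1) ≤ 101*k := by omega
    have h2 : (100*(k+1))^6 ≤ (101*k)^6 := Nat.pow_le_pow_left h1 6
    rw [mul_pow, mul_pow] at h2
    have h3 : 100^6 * (k+1)^6 ≤ 100^6 * (2 * k^6) := by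
      calc 100^6 * (k+1)^6 ≤ 101^6 * k^6 := h2
        _ ≤ (2*100^6) * k^6 := Nat.mul_le_mul_right _ (by norm_num)
        _ = 100^6 * (2 * k^6) := by ring
    have h4 : (k+1)^6 ≤ 2 * k^6 := Nat.le_of_mul_le_mul_left h3 (by norm_num)
    calc (k+1)^6 ≤ 2 * k^6 := h4
      _ ≤ 2 * 2^k := by omega
      _ = 2^(k+1) := by ring

set_option maxHeartbeats 1000000 in
/-- For every `0 < δ < 2` there is `K` such that for all `k ≥ K` and
`0 < w ≤ 1/2^(k-2)`: if `ρ̃ > 1` is real with `u_{k,w}(ρ̃) = 0` and `u_{k,w}` nonvanishing on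
`(0, ρ̃)`, then `u_{k,w}` has no complex zero `z` with `ρ̃ < |z| < 1 + (2-δ) ln k / k`. -/
theorem stmt12 (δ : ℝ) (hδ0 : 0 < δ) (hδ2 : δ < 2) :
    ∃ K : ℕ, ∀ k : ℕ, K ≤ k → ∀ w : ℝ, 0 < w → w ≤ 1 / 2 ^ (k - 2) →
    ∀ ρ : ℝ, 1 < ρ → ukwC k w (ρ : ℂ) = 0 →
      (∀ x : ℝ, x ∈ Set.Ioo (0 : ℝ) ρ → ukwC k w (x : ℂ) ≠ 0) →
    ∀ z : ℂ, ρ < ‖z‖ → ‖z‖ < 1 + (2 - δ) * Real.log k / k →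
      ukwC k w z ≠ 0 := by
  refine ⟨100, fun k hk100 w hw0 hw ρ hρ1 hρzero _ z hρz hzR hz0 => ?_⟩
  -- basic numeric facts about k
  have hk1 : (1:ℝ) ≤ (k:ℝ) := by exact_mod_cast Nat.one_le_of_lt (by omega : 1 < k)
  have hk0 : (0:ℝ) < (k:ℝ) := by linarith
  have hlogk : 0 ≤ Real.log k := Real.log_nonneg hk1
  set Rb : ℝ := 1 + 2 * Real.log k / k with hRbdef
  have hRb1 : 1 ≤ Rb := by
    have : 0 ≤ 2 * Real.log k / k := by positivity
    simp only [hRbdef]; linarith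
  have hRb0 : 0 ≤ Rb := by linarith
  -- |z| and ρ are bounded by Rb
  have hzRb : ‖z‖ ≤ Rb := by
    have h1 : (2 - δ) * Real.log k / k ≤ 2 * Real.log k / k := by
      gcongr; linarith
    simp only [hRbdef]; linarith [hzR]
  have hρ0 : (0:ℝ) < ρ := by linarith
  have hρabs : ‖((ρ:ℝ) : ℂ)‖ = ρ := by
    rw [Complex.norm_real, Real.norm_eq_abs, abs_of_pos hρ0]
  have hρRb : ‖((ρ:ℝ):ℂ)‖ ≤ Rb := by
    rw [hρabs]
    have h := hzRb; linarith
  have hzρ : z ≠ ((ρ:ℝ):ℂ) := by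
    intro h; rw [h, hρabs] at hρz; exact lt_irrefl _ hρz
  have hd0 : (0:ℝ) < ‖z - ((ρ:ℝ):ℂ)‖ := by
    rw [norm_pos_iff]; exact sub_ne_zero_of_ne hzρ
  set d : ℝ := ‖z - ((ρ:ℝ):ℂ)‖ with hddef
  -- the constant cr and the bound q
  set cr : ℝ := w * k / ((k:ℝ)+1)^2 with hcrdef
  have hcr0 : 0 ≤ cr := by positivity
  set c : ℂ := (w:ℂ) * k / ((k:ℂ)+1)^2 with hcdef
  have hcnorm : ‖c‖ = cr := by
    have : c = ((cr:ℝ):ℂ) := by simp only [hcdef, hcrdef]; push_cast; ring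
    rw [this, Complex.norm_real, Real.norm_eq_abs, abs_of_nonneg hcr0]
  -- the power bound Rb^(k+1) ≤ k^4
  have hRbpow : Rb^(k+1) ≤ (k:ℝ)^4 := by
    have h1 : Rb ≤ Real.exp (2 * Real.log k / k) := by
      simpa [hRbdef, add_comm] using Real.add_one_le_exp (2 * Real.log k / k)
    have h2 : Rb^(k+1) ≤ Real.exp (2 * Real.log k / k) ^ (k+1) :=
      pow_le_pow_left₀ hRb0 h1 _
    have h3 : Real.exp (2 * Real.log k / k) ^ (k+1)
        = Real.exp (((k:ℝ)+1) * (2 * Real.log k / k)) := by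
      rw [← Real.exp_nat_mul]; push_cast; ring_nf
    have h4 : ((k:ℝ)+1) * (2 * Real.log k / k) ≤ 4 * Real.log k := by
      have e1 : ((k:ℝ)+1) * (2 * Real.log k / k) = 2 * Real.log k * (((k:ℝ)+1)/k) := by
        ring
      have e2 : ((k:ℝ)+1)/k ≤ 2 := by rw [div_le_iff₀ hk0]; linarith
      have e3 := mul_le_mul_of_nonneg_left e2 (by positivity : (0:ℝ) ≤ 2 * Real.log k)
      rw [e1]; linarith
    have h5 : Real.exp (4 * Real.log k) = (k:ℝ)^4 := by
      rw [show (4:ℝ) * Real.log k = ((4:ℕ):ℝ) * Real.log k by norm_num,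
        Real.exp_nat_mul, Real.exp_log hk0]
    calc Rb^(k+1) ≤ Real.exp (((k:ℝ)+1) * (2 * Real.log k / k)) := h3 ▸ h2
      _ ≤ Real.exp (4 * Real.log k) := Real.exp_le_exp.mpr h4
      _ = (k:ℝ)^4 := h5
  -- numeric bound on q
  set q : ℝ := cr * Rb^(k+1) with hqdef
  have hq0 : 0 ≤ q := by positivity
  have h2k : ((k:ℝ))^6 ≤ 2^k := by exact_mod_cast pow6_le_two_pow k hk100
  have hw4 : w ≤ 4 / 2^k := by
    have h2 : (2:ℝ)^k = 2^(k-2) * 2^2 := by rw [← pow_add]; congr 1; omega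
    have h3 : (4:ℝ)/2^k = 1/2^(k-2) := by
      have ha : (2:ℝ)^(k-2) ≠ 0 := by positivity
      rw [h2]; field_simp; ring
    rw [h3]; exact hw
  have hcrk : cr ≤ w / k := by
    rw [hcrdef, div_le_div_iff₀ (by positivity) hk0]
    nlinarith
  have hq3 : q * (k:ℝ)^3 ≤ 4 := by
    have h1 : q ≤ (w/k) * (k:ℝ)^4 := by
      rw [hqdef]
      exact mul_le_mul hcrk hRbpow (by positivity) (by positivity)
    have h2 : (w/k) * (k:ℝ)^4 = w * k^3 := by field_simp
    have h3 : q ≤ w * k^3 := by rw [← h2]; exact h1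
    have h4 : w * k^3 ≤ (4/2^k) * k^3 := by
      gcongr
    have h5 : (4/2^k) * (k:ℝ)^3 * k^3 ≤ 4 := by
      rw [div_mul_eq_mul_div, div_mul_eq_mul_div, div_le_iff₀ (by positivity)]
      calc 4 * (k:ℝ)^3 * k^3 = 4 * k^6 := by ring
        _ ≤ 4 * 2^k := by gcongr
    calc q * (k:ℝ)^3 ≤ (4/2^k) * k^3 * k^3 := by
          have := h3.trans h4
          gcongr
      _ ≤ 4 := h5
  have h100 : (100:ℝ) ≤ (k:ℝ) := by exact_mod_cast hk100
  have hk3 : (100:ℝ)^3 ≤ (k:ℝ)^3 := pow_le_pow_left₀ (by norm_num) h100 3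
  have hk2' : (10000:ℝ) ≤ (k:ℝ)^2 := by
    calc (10000:ℝ) = 100^2 := by norm_num
      _ ≤ (k:ℝ)^2 := pow_le_pow_left₀ (by norm_num) h100 2
  have h6 : q ≤ 4/1000000 := by
    rw [le_div_iff₀ (by norm_num)]
    calc q * 1000000 = q * (100:ℝ)^3 := by norm_num
      _ ≤ q * (k:ℝ)^3 := mul_le_mul_of_nonneg_left hk3 hq0
      _ ≤ 4 := hq3
  have h7 : (k:ℝ) * q ≤ 4/10000 := by
    rw [le_div_iff₀ (by norm_num)]
    calc (k:ℝ)*q*10000 = q * ((k:ℝ)*10000) := by ring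
      _ ≤ q * ((k:ℝ)*(k:ℝ)^2) := by
          refine mul_le_mul_of_nonneg_left ?_ hq0
          exact mul_le_mul_of_nonneg_left hk2' hk0.le
      _ = q * (k:ℝ)^3 := by ring
      _ ≤ 4 := hq3
  have hq18 : q ≤ 1/8 := by linarith
  have hfin : (12*(k:ℝ)+16) * q < 1 := by
    have e : (12*(k:ℝ)+16)*q = 12*((k:ℝ)*q)+16*q := by ring
    rw [e]; linarith
  -- coefficient sequences
  set a : ℕ → ℂ := fun m => c^m / ((Nat.factorial m : ℂ) * fallFactC ((m:ℂ) + 1/((k:ℂ)+1)) m)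
    with hadef
  set b : ℕ → ℂ := fun m => c^m / ((Nat.factorial m : ℂ) * fallFactC ((m:ℂ) - 1/((k:ℂ)+1)) m)
    with hbdef
  have hfac1 : ∀ m : ℕ, (1:ℝ) ≤ (Nat.factorial m : ℝ) := fun m => by
    exact_mod_cast Nat.one_le_iff_ne_zero.mpr (Nat.factorial_ne_zero m)
  have hna : ∀ m, ‖a m‖ ≤ cr^m := by
    intro m
    have hD : (1:ℝ) ≤ ‖(Nat.factorial m : ℂ) * fallFactC ((m:ℂ) + 1/((k:ℂ)+1)) m‖ := by
      rw [norm_mul]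
      have h1 : (1:ℝ) ≤ ‖(Nat.factorial m : ℂ)‖ := by
        rw [Complex.norm_natCast]; exact hfac1 m
      have h2 : (1:ℝ) ≤ ‖fallFactC ((m:ℂ) + 1/((k:ℂ)+1)) m‖ :=
        le_trans (hfac1 m) (norm_fall_add k m)
      calc (1:ℝ) = 1*1 := by norm_num
        _ ≤ _ := mul_le_mul h1 h2 zero_le_one (le_trans zero_le_one h1)
    have : ‖a m‖ = cr^m / ‖(Nat.factorial m : ℂ) * fallFactC ((m:ℂ) + 1/((k:ℂ)+1)) m‖ := by
      simp only [hadef]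
      rw [norm_div, norm_pow, hcnorm]
    rw [this]
    exact div_le_self (by positivity) hD
  have hnb : ∀ m, ‖b m‖ ≤ (2*cr)^m := by
    intro m
    have hD2 : ((2:ℝ)^m)⁻¹ ≤ ‖(Nat.factorial m : ℂ) * fallFactC ((m:ℂ) - 1/((k:ℂ)+1)) m‖ := by
      rw [norm_mul]
      have h1 : (1:ℝ) ≤ ‖(Nat.factorial m : ℂ)‖ := by
        rw [Complex.norm_natCast]; exact hfac1 m
      have h2 : ((2:ℝ)^m)⁻¹ ≤ ‖fallFactC ((m:ℂ) - 1/((k:ℂ)+1)) m‖ := by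
        refine le_trans ?_ (norm_fall_sub k m (by omega))
        rw [inv_eq_one_div]
        gcongr
        exact hfac1 m
      calc ((2:ℝ)^m)⁻¹ = 1 * ((2:ℝ)^m)⁻¹ := by ring
        _ ≤ ‖(Nat.factorial m : ℂ)‖ * ‖fallFactC ((m:ℂ) - 1/((k:ℂ)+1)) m‖ :=
            mul_le_mul h1 h2 (by positivity) (le_trans zero_le_one h1)
    have hD2pos : (0:ℝ) < ‖(Nat.factorial m : ℂ) * fallFactC ((m:ℂ) - 1/((k:ℂ)+1)) m‖ :=
      lt_of_lt_of_le (by positivity) hD2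
    have hb : ‖b m‖ = cr^m / ‖(Nat.factorial m : ℂ) * fallFactC ((m:ℂ) - 1/((k:ℂ)+1)) m‖ := by
      simp only [hbdef]
      rw [norm_div, norm_pow, hcnorm]
    rw [hb, div_le_iff₀ hD2pos]
    calc cr^m = (2*cr)^m * ((2:ℝ)^m)⁻¹ := by
          rw [mul_pow]; field_simp
      _ ≤ (2*cr)^m * ‖(Nat.factorial m : ℂ) * fallFactC ((m:ℂ) - 1/((k:ℂ)+1)) m‖ := by
          gcongr
  -- per-term norm bounds
  have hterm1 : ∀ (ζ:ℂ), ‖ζ‖ ≤ Rb → ∀ m, ‖a m * ζ^((k+1)*m)‖ ≤ q^m := by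
    intro ζ hζ m
    rw [norm_mul, norm_pow]
    calc ‖a m‖ * ‖ζ‖^((k+1)*m) ≤ cr^m * Rb^((k+1)*m) :=
        mul_le_mul (hna m) (pow_le_pow_left₀ (norm_nonneg ζ) hζ _) (by positivity) (by positivity)
      _ = q^m := by rw [hqdef, mul_pow, ← pow_mul]
  have hterm2 : ∀ (ζ:ℂ), ‖ζ‖ ≤ Rb → ∀ m, ‖b m * ζ^((k+1)*m)‖ ≤ (2*q)^m := by
    intro ζ hζ m
    rw [norm_mul, norm_pow]
    calc ‖b m‖ * ‖ζ‖^((k+1)*m) ≤ (2*cr)^m * Rb^((k+1)*m) :=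
        mul_le_mul (hnb m) (pow_le_pow_left₀ (norm_nonneg ζ) hζ _) (by positivity) (by positivity)
      _ = (2*q)^m := by rw [hqdef, mul_pow, mul_pow, mul_pow, ← pow_mul]; ring
  have hq1 : q < 1 := by linarith
  have h2q0 : (0:ℝ) ≤ 2*q := by linarith
  have h2q1 : 2*q < 1 := by linarith
  have h4q0 : (0:ℝ) ≤ 4*q := by linarith
  have h4q1 : 4*q < 1 := by linarith
  have hsum1 : ∀ ζ:ℂ, ‖ζ‖ ≤ Rb → Summable (fun m => a m * ζ^((k+1)*m)) := fun ζ hζ =>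
    Summable.of_norm_bounded (summable_geometric_of_lt_one hq0 hq1) (hterm1 ζ hζ)
  have hsum2 : ∀ ζ:ℂ, ‖ζ‖ ≤ Rb → Summable (fun m => b m * ζ^((k+1)*m)) := fun ζ hζ =>
    Summable.of_norm_bounded (summable_geometric_of_lt_one h2q0 h2q1) (hterm2 ζ hζ)
  have hsum1' : ∀ ζ:ℂ, ‖ζ‖ ≤ Rb → Summable (fun m => a m * ζ^((k+1)*m+1)) := by
    intro ζ hζ
    refine ((hsum1 ζ hζ).mul_right ζ).congr fun m => ?_
    rw [pow_succ]; ring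
  -- factor ukwC
  have hfac : ∀ ζ : ℂ, ukwC k w ζ
      = Complex.exp ζ * ((∑' m, a m * ζ^((k+1)*m+1)) - ∑' m, b m * ζ^((k+1)*m)) := by
    intro ζ
    rw [ukwC]
    have e1 : (∑' m : ℕ, ((w:ℂ)*k/((k:ℂ)+1)^2)^m * ζ^((k+1)*m) /
        ((Nat.factorial m : ℂ) * fallFactC ((m:ℂ)+1/((k:ℂ)+1)) m))
        = ∑' m, a m * ζ^((k+1)*m) :=
      tsum_congr fun m => by simp only [hadef, hcdef]; ring
    have e2 : (∑' m : ℕ, ((w:ℂ)*k/((k:ℂ)+1)^2)^m * ζ^((k+1)*m) /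
        ((Nat.factorial m : ℂ) * fallFactC ((m:ℂ)-1/((k:ℂ)+1)) m))
        = ∑' m, b m * ζ^((k+1)*m) :=
      tsum_congr fun m => by simp only [hbdef, hcdef]; ring
    rw [e1, e2]
    have e3 : ζ * ∑' m, a m * ζ^((k+1)*m) = ∑' m, a m * ζ^((k+1)*m+1) := by
      rw [← tsum_mul_left]
      exact tsum_congr fun m => by rw [pow_succ]; ring
    rw [← e3]; ring
  have hTz : (∑' m, a m * z^((k+1)*m+1)) - (∑' m, b m * z^((k+1)*m)) = 0 := by
    have h := hz0
    rw [hfac z] at h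
    rcases mul_eq_zero.mp h with h' | h'
    · exact absurd h' (Complex.exp_ne_zero z)
    · exact h'
  have hTρ : (∑' m, a m * ((ρ:ℝ):ℂ)^((k+1)*m+1)) - (∑' m, b m * ((ρ:ℝ):ℂ)^((k+1)*m)) = 0 := by
    have h := hρzero
    rw [hfac ((ρ:ℝ):ℂ)] at h
    rcases mul_eq_zero.mp h with h' | h'
    · exact absurd h' (Complex.exp_ne_zero _)
    · exact h'
  -- subtract and shift
  have sA1 := hsum1' z hzRb
  have sA2 := hsum1' ((ρ:ℝ):ℂ) hρRb
  have sB1 := hsum2 z hzRb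
  have sB2 := hsum2 ((ρ:ℝ):ℂ) hρRb
  have eA : (∑' m, a m * z^((k+1)*m+1)) - (∑' m, a m * ((ρ:ℝ):ℂ)^((k+1)*m+1))
      = ∑' m, (a m * z^((k+1)*m+1) - a m * ((ρ:ℝ):ℂ)^((k+1)*m+1)) := (Summable.tsum_sub sA1 sA2).symm
  have eB : (∑' m, b m * z^((k+1)*m)) - (∑' m, b m * ((ρ:ℝ):ℂ)^((k+1)*m))
      = ∑' m, (b m * z^((k+1)*m) - b m * ((ρ:ℝ):ℂ)^((k+1)*m)) := (Summable.tsum_sub sB1 sB2).symm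
  have ha0 : a 0 = 1 := by simp [hadef, fallFactC]
  have eA0 : ∑' m, (a m * z^((k+1)*m+1) - a m * ((ρ:ℝ):ℂ)^((k+1)*m+1))
      = (z - ((ρ:ℝ):ℂ)) +
        ∑' m, (a (m+1) * z^((k+1)*(m+1)+1) - a (m+1) * ((ρ:ℝ):ℂ)^((k+1)*(m+1)+1)) := by
    rw [Summable.tsum_eq_zero_add (sA1.sub sA2)]
    congr 1
    simp [ha0]
  have eB0 : ∑' m, (b m * z^((k+1)*m) - b m * ((ρ:ℝ):ℂ)^((k+1)*m))
      = ∑' m, (b (m+1) * z^((k+1)*(m+1)) - b (m+1) * ((ρ:ℝ):ℂ)^((k+1)*(m+1))) := by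
    rw [Summable.tsum_eq_zero_add (sB1.sub sB2)]
    simp
  have hkey : (z - ((ρ:ℝ):ℂ)) +
        (∑' m, (a (m+1) * z^((k+1)*(m+1)+1) - a (m+1) * ((ρ:ℝ):ℂ)^((k+1)*(m+1)+1)))
      = ∑' m, (b (m+1) * z^((k+1)*(m+1)) - b (m+1) * ((ρ:ℝ):ℂ)^((k+1)*(m+1))) := by
    have h := sub_eq_zero.mpr (hTz.trans hTρ.symm)
    have h2 : (∑' m, a m * z^((k+1)*m+1)) - (∑' m, a m * ((ρ:ℝ):ℂ)^((k+1)*m+1))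
        = (∑' m, b m * z^((k+1)*m)) - (∑' m, b m * ((ρ:ℝ):ℂ)^((k+1)*m)) := by
      linear_combination hTz - hTρ
    rw [eA, eB] at h2
    rw [eA0, eB0] at h2
    exact h2
  -- per-term norm bounds on shifted series
  have hAterm : ∀ m : ℕ,
      ‖a (m+1) * z^((k+1)*(m+1)+1) - a (m+1) * ((ρ:ℝ):ℂ)^((k+1)*(m+1)+1)‖
      ≤ (((k:ℝ)+2) * (2*q) * d) * (2*q)^m := by
    intro m
    rw [← mul_sub, norm_mul]
    have hps := norm_pow_sub_pow z ((ρ:ℝ):ℂ) Rb hzRb hρRb ((k+1)*(m+1)+1) hRb0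
    rw [Nat.add_sub_cancel] at hps
    have h1 : ‖a (m+1)‖ * ‖z^((k+1)*(m+1)+1) - ((ρ:ℝ):ℂ)^((k+1)*(m+1)+1)‖
        ≤ cr^(m+1) * ((((k+1)*(m+1)+1 : ℕ):ℝ) * Rb^((k+1)*(m+1)) * d) :=
      mul_le_mul (hna (m+1)) hps (norm_nonneg _) (by positivity)
    refine h1.trans ?_
    have hm2 : ((m+1 : ℕ)) ≤ 2^(m+1) := (Nat.lt_two_pow_self (n := m+1)).le
    have hN : (((k+1)*(m+1)+1 : ℕ):ℝ) ≤ ((k:ℝ)+2) * 2^(m+1) := by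
      have hnat : ((k+1)*(m+1)+1 : ℕ) ≤ (k+2) * 2^(m+1) := by
        calc (k+1)*(m+1)+1 ≤ (k+2)*(m+1) := by
              have e : (k+2)*(m+1) = (k+1)*(m+1) + (m+1) := by ring
              omega
          _ ≤ (k+2)*2^(m+1) := Nat.mul_le_mul le_rfl hm2
      calc (((k+1)*(m+1)+1 : ℕ):ℝ) ≤ (((k+2) * 2^(m+1) : ℕ):ℝ) := by exact_mod_cast hnat
        _ = ((k:ℝ)+2) * 2^(m+1) := by push_cast; ring
    have e2 : (2*q)^(m+1) = 2^(m+1)*(cr^(m+1)*Rb^((k+1)*(m+1))) := by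
      rw [hqdef, mul_pow, mul_pow, ← pow_mul]
    calc cr^(m+1) * ((((k+1)*(m+1)+1 : ℕ):ℝ) * Rb^((k+1)*(m+1)) * d)
        = (((k+1)*(m+1)+1 : ℕ):ℝ) * (cr^(m+1) * Rb^((k+1)*(m+1))) * d := by ring
      _ ≤ (((k:ℝ)+2) * 2^(m+1)) * (cr^(m+1) * Rb^((k+1)*(m+1))) * d := by gcongr
      _ = ((k:ℝ)+2) * (2^(m+1)*(cr^(m+1)*Rb^((k+1)*(m+1)))) * d := by ring
      _ = ((k:ℝ)+2) * (2*q)^(m+1) * d := by rw [e2]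
      _ = (((k:ℝ)+2) * (2*q) * d) * (2*q)^m := by ring
  have hBterm : ∀ m : ℕ,
      ‖b (m+1) * z^((k+1)*(m+1)) - b (m+1) * ((ρ:ℝ):ℂ)^((k+1)*(m+1))‖
      ≤ (((k:ℝ)+1) * (4*q) * d) * (4*q)^m := by
    intro m
    rw [← mul_sub, norm_mul]
    have hps := norm_pow_sub_pow z ((ρ:ℝ):ℂ) Rb hzRb hρRb ((k+1)*(m+1)) hRb0
    have h1 : ‖b (m+1)‖ * ‖z^((k+1)*(m+1)) - ((ρ:ℝ):ℂ)^((k+1)*(m+1))‖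
        ≤ (2*cr)^(m+1) * ((((k+1)*(m+1) : ℕ):ℝ) * Rb^((k+1)*(m+1)-1) * d) :=
      mul_le_mul (hnb (m+1)) hps (norm_nonneg _) (by positivity)
    refine h1.trans ?_
    have hRbmono : Rb^((k+1)*(m+1)-1) ≤ Rb^((k+1)*(m+1)) :=
      pow_le_pow_right₀ hRb1 (Nat.sub_le _ _)
    have hm2 : ((m+1 : ℕ)) ≤ 2^(m+1) := (Nat.lt_two_pow_self (n := m+1)).le
    have hN : (((k+1)*(m+1) : ℕ):ℝ) ≤ ((k:ℝ)+1) * 2^(m+1) := by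
      have hnat : ((k+1)*(m+1) : ℕ) ≤ (k+1) * 2^(m+1) := Nat.mul_le_mul le_rfl hm2
      calc (((k+1)*(m+1) : ℕ):ℝ) ≤ (((k+1) * 2^(m+1) : ℕ):ℝ) := by exact_mod_cast hnat
        _ = ((k:ℝ)+1) * 2^(m+1) := by push_cast; ring
    have e4 : (4:ℝ)^(m+1) = 2^(m+1)*2^(m+1) := by rw [← mul_pow]; norm_num
    have e2 : (4*q)^(m+1) = (2*cr)^(m+1) * (2^(m+1) * Rb^((k+1)*(m+1))) := by
      rw [hqdef, mul_pow, mul_pow, ← pow_mul, mul_pow, e4]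
      ring
    calc (2*cr)^(m+1) * ((((k+1)*(m+1) : ℕ):ℝ) * Rb^((k+1)*(m+1)-1) * d)
        ≤ (2*cr)^(m+1) * ((((k:ℝ)+1) * 2^(m+1)) * Rb^((k+1)*(m+1)) * d) := by
          gcongr
      _ = ((k:ℝ)+1) * ((2*cr)^(m+1) * (2^(m+1) * Rb^((k+1)*(m+1)))) * d := by ring
      _ = ((k:ℝ)+1) * (4*q)^(m+1) * d := by rw [e2]
      _ = (((k:ℝ)+1) * (4*q) * d) * (4*q)^m := by ring
  -- sum the bounds
  have hSA : ‖∑' m, (a (m+1) * z^((k+1)*(m+1)+1) - a (m+1) * ((ρ:ℝ):ℂ)^((k+1)*(m+1)+1))‖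
      ≤ (((k:ℝ)+2) * (2*q) * d) * (1-2*q)⁻¹ :=
    tsum_of_norm_bounded ((hasSum_geometric_of_lt_one h2q0 h2q1).mul_left
      (((k:ℝ)+2) * (2*q) * d)) hAterm
  have hSB : ‖∑' m, (b (m+1) * z^((k+1)*(m+1)) - b (m+1) * ((ρ:ℝ):ℂ)^((k+1)*(m+1)))‖
      ≤ (((k:ℝ)+1) * (4*q) * d) * (1-4*q)⁻¹ :=
    tsum_of_norm_bounded ((hasSum_geometric_of_lt_one h4q0 h4q1).mul_left
      (((k:ℝ)+1) * (4*q) * d)) hBterm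
  have hinv2 : (1-2*q)⁻¹ ≤ 2 := by
    have h : (1:ℝ)/2 ≤ 1-2*q := by linarith
    calc (1-2*q)⁻¹ = 1/(1-2*q) := by rw [one_div]
      _ ≤ 1/(1/2) := one_div_le_one_div_of_le (by norm_num) h
      _ = 2 := by norm_num
  have hinv4 : (1-4*q)⁻¹ ≤ 2 := by
    have h : (1:ℝ)/2 ≤ 1-4*q := by linarith
    calc (1-4*q)⁻¹ = 1/(1-4*q) := by rw [one_div]
      _ ≤ 1/(1/2) := one_div_le_one_div_of_le (by norm_num) h
      _ = 2 := by norm_num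
  -- final contradiction
  have hzr : z - ((ρ:ℝ):ℂ)
      = (∑' m, (b (m+1) * z^((k+1)*(m+1)) - b (m+1) * ((ρ:ℝ):ℂ)^((k+1)*(m+1))))
        - (∑' m, (a (m+1) * z^((k+1)*(m+1)+1) - a (m+1) * ((ρ:ℝ):ℂ)^((k+1)*(m+1)+1))) := by
    linear_combination hkey
  have hdle : d ≤ ((12*(k:ℝ)+16)*q) * d := by
    have h1 : d ≤ (((k:ℝ)+1) * (4*q) * d) * (1-4*q)⁻¹ + (((k:ℝ)+2) * (2*q) * d) * (1-2*q)⁻¹ := by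
      calc d = ‖z - ((ρ:ℝ):ℂ)‖ := hddef
        _ = ‖_ - _‖ := by rw [hzr]
        _ ≤ _ + _ := norm_sub_le _ _
        _ ≤ _ := add_le_add hSB hSA
    have h2 : (((k:ℝ)+1) * (4*q) * d) * (1-4*q)⁻¹ ≤ (((k:ℝ)+1) * (4*q) * d) * 2 :=
      mul_le_mul_of_nonneg_left hinv4 (by positivity)
    have h3 : (((k:ℝ)+2) * (2*q) * d) * (1-2*q)⁻¹ ≤ (((k:ℝ)+2) * (2*q) * d) * 2 :=
      mul_le_mul_of_nonneg_left hinv2 (by positivity)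
    have h4 : (((k:ℝ)+1) * (4*q) * d) * 2 + (((k:ℝ)+2) * (2*q) * d) * 2
        = ((12*(k:ℝ)+16)*q) * d := by ring
    linarith
  have hlt : ((12*(k:ℝ)+16)*q) * d < 1 * d := mul_lt_mul_of_pos_right hfin hd0
  rw [one_mul] at hlt
  linarith
end

section
/- For every integer k ≥ 1, the sum of the weights w(t) = 1/∏_{s fringe subtree of t} |s| over all plane binary trees t of size k equals 1; equivalently, Σ_{t : |t| = k} ℓ(t) = k!, where ℓ(t) = k!·w(t) is the number of increasing labelings of t. -/
deriving instance DecidableEq for PBTree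

namespace PBTree

def treesOfSize : ℕ → Finset PBTree
  | 0 => {leaf}
  | (k+1) => (Finset.range (k+1)).attach.biUnion
      (fun i => ((treesOfSize i.1) ×ˢ (treesOfSize (k - i.1))).image (fun p => node p.1 p.2))
decreasing_by
  · have := Finset.mem_range.mp i.2; omega
  · omega

lemma subtreeProd_pos (t : PBTree) : 0 < t.subtreeProd := by
  induction t with
  | leaf => simp [subtreeProd]
  | node l r hl hr =>
    simp only [subtreeProd, size]
    exact Nat.mul_pos (by omega) (Nat.mul_pos hl hr)

lemma mem_treesOfSize : ∀ (t : PBTree) (k : ℕ), t ∈ treesOfSize k ↔ t.size = k := by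
  intro t
  induction t with
  | leaf =>
    intro k
    cases k with
    | zero => simp [treesOfSize, size]
    | succ k => simp [treesOfSize, size]
  | node l r hl hr =>
    intro k
    cases k with
    | zero => simp [treesOfSize, size]
    | succ k =>
      simp only [treesOfSize, Finset.mem_biUnion, Finset.mem_attach, Finset.mem_image,
        Finset.mem_product, Prod.exists, size, node.injEq, true_and]
      constructor
      · rintro ⟨i, a, b, ⟨ha, hb⟩, rfl, rfl⟩
        have hi := Finset.mem_range.mp i.2
        rw [hl i.1 |>.mp ha, hr (k - i.1) |>.mp hb]
        omega
      · rintro h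
        have hls : l.size + r.size = k := by omega
        refine ⟨⟨l.size, Finset.mem_range.mpr (by omega)⟩, l, r,
          ⟨(hl l.size).mpr rfl, (hr (k - l.size)).mpr ?_⟩, rfl, rfl⟩
        omega

lemma sum_weights : ∀ k, ∑ t ∈ treesOfSize k, (1 : ℝ) / (t.subtreeProd : ℝ) = 1 := by
  intro k
  induction k using Nat.strong_induction_on with
  | _ k ih =>
    cases k with
    | zero => simp [treesOfSize, subtreeProd]
    | succ k =>
      rw [treesOfSize, Finset.sum_biUnion]
      · have hstep : ∀ i ∈ (Finset.range (k+1)).attach,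
            ∑ t ∈ ((treesOfSize i.1) ×ˢ (treesOfSize (k-i.1))).image (fun p => node p.1 p.2),
              (1 : ℝ) / (t.subtreeProd : ℝ) = 1 / (k+1 : ℝ) := by
          intro i _
          have hik : i.1 ≤ k := by have := Finset.mem_range.mp i.2; omega
          rw [Finset.sum_image (by rintro ⟨a,b⟩ _ ⟨c,d⟩ _ h; simpa using h)]
          rw [Finset.sum_product]
          have key : ∀ a ∈ treesOfSize i.1, ∀ b ∈ treesOfSize (k-i.1),
              (1:ℝ) / ((PBTree.node a b).subtreeProd : ℝ)
              = (1/(k+1:ℝ)) * ((1:ℝ)/(a.subtreeProd:ℝ) * ((1:ℝ)/(b.subtreeProd:ℝ))) := by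
            intro a ha b hb
            have hsa := (mem_treesOfSize a i.1).mp ha
            have hsb := (mem_treesOfSize b (k-i.1)).mp hb
            have hsize : (PBTree.node a b).size = k + 1 := by
              simp only [size]; omega
            have h1 : (0:ℝ) < (a.subtreeProd : ℝ) := by exact_mod_cast subtreeProd_pos a
            have h2 : (0:ℝ) < (b.subtreeProd : ℝ) := by exact_mod_cast subtreeProd_pos b
            rw [subtreeProd, hsize]
            push_cast
            field_simp
          rw [Finset.sum_congr rfl (fun a ha => Finset.sum_congr rfl (fun b hb => key a ha b hb))]
          have h1 : ∑ a ∈ treesOfSize i.1, ∑ b ∈ treesOfSize (k-i.1),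
              (1/(k+1:ℝ)) * ((1:ℝ)/(a.subtreeProd:ℝ) * ((1:ℝ)/(b.subtreeProd:ℝ)))
              = (1/(k+1:ℝ)) * ((∑ a ∈ treesOfSize i.1, (1:ℝ)/(a.subtreeProd:ℝ)) *
                  (∑ b ∈ treesOfSize (k-i.1), (1:ℝ)/(b.subtreeProd:ℝ))) := by
            rw [Finset.sum_mul_sum, Finset.mul_sum]
            exact Finset.sum_congr rfl fun a _ => by rw [Finset.mul_sum]
          rw [h1, ih i.1 (by omega), ih (k-i.1) (by omega)]
          ring
        rw [Finset.sum_congr rfl hstep]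
        simp only [Finset.sum_const, Finset.card_attach, Finset.card_range, nsmul_eq_mul]
        push_cast
        field_simp
      · intro i _ j _ hij
        simp only [Finset.disjoint_left, Finset.mem_image, Finset.mem_product, Prod.exists]
        intro t h1 h2
        obtain ⟨a, b, ⟨ha, hb⟩, heq1⟩ := h1
        obtain ⟨c, d, ⟨hc, hd⟩, heq2⟩ := h2
        obtain ⟨hca, -⟩ : c = a ∧ d = b := by
          have := heq2.trans heq1.symm
          simpa [PBTree.node.injEq] using this
        rw [hca] at hc
        have : i.1 = j.1 :=
          ((mem_treesOfSize a i.1).mp ha).symm.trans ((mem_treesOfSize a j.1).mp hc)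
        exact hij (Subtype.ext this)

end PBTree

/-- For every `k ≥ 1`, the weights `w(t) = 1/∏_{s fringe subtree of t} |s|`
of all plane binary trees of size `k` sum to `1`. -/
theorem stmt19 (k : ℕ) (hk : 1 ≤ k) :
    ∑' t : {t : PBTree // t.size = k}, (1 : ℝ) / ((t : PBTree).subtreeProd : ℝ) = 1 := by
  calc ∑' t : {t : PBTree // t.size = k}, (1 : ℝ) / ((t : PBTree).subtreeProd : ℝ)
      = ∑' t : {t : PBTree // t ∈ PBTree.treesOfSize k},
          (1 : ℝ) / ((t : PBTree).subtreeProd : ℝ) := by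
        exact (Equiv.subtypeEquivRight
          (fun t => (PBTree.mem_treesOfSize t k).symm)).tsum_eq
          (fun t : {t : PBTree // t ∈ PBTree.treesOfSize k} =>
            (1 : ℝ) / ((t : PBTree).subtreeProd : ℝ))
    _ = ∑ t ∈ PBTree.treesOfSize k, (1 : ℝ) / (t.subtreeProd : ℝ) := by
        exact Finset.tsum_subtype (PBTree.treesOfSize k)
          (fun t => (1 : ℝ) / (t.subtreeProd : ℝ))
    _ = 1 := PBTree.sum_weights k
end
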